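/- arXiv:1404.4187 — 4 statements merged into one kernel-verified Lean document; each statement's English description precedes it below -/
import Mathlib

section
/- For the continuous-time heat kernel p on Z generated by γΔ (where Δ is the discrete Laplacian and p(0,·)=δ₀), there exists a constant C such that for all z ∈ Z and t > 0, |p(t,z) - p(t,z+1)| ≤ C/(γt). -/
open MeasureTheory Real Set Filter

lemma integral_Ioi_mul_exp_neg_mul_sq {b : ℝ} (hb : 0 < b) :
    ∫ x in Ioi (0 : ℝ), x * Real.exp (-b * x ^ 2) = (2 * b)⁻¹ := by
  have hb' : b ≠ 0 := hb.ne'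
  have A : ∀ x : ℝ, HasDerivAt (fun x : ℝ => -(2 * b)⁻¹ * Real.exp (-b * x ^ 2))
      (x * Real.exp (-b * x ^ 2)) x := by
    intro x
    convert ((hasDerivAt_pow 2 x).const_mul (-b)).exp.const_mul (-(2 * b)⁻¹) using 1
    · rfl
    · rfl
    field_simp
    ring
  have B : Filter.Tendsto (fun y : ℝ ↦ -(2 * b)⁻¹ * Real.exp (-b * y ^ 2))
      Filter.atTop (nhds (-(2 * b)⁻¹ * 0)) := by
    refine Filter.Tendsto.const_mul _ ?_
    exact Real.tendsto_exp_atBot.comp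
      ((Filter.tendsto_pow_atTop two_ne_zero).const_mul_atTop_of_neg (neg_lt_zero.2 hb))
  have := MeasureTheory.integral_Ioi_of_hasDerivAt_of_tendsto' (a := 0) (fun x _ => A x)
    (integrable_mul_exp_neg_mul_sq hb).integrableOn B
  rw [this]
  simp

lemma integral_Icc_abs_mul_exp_neg_mul_sq {b : ℝ} (hb : 0 < b) :
    ∫ x in Icc (-π) π, |x| * Real.exp (-b * x ^ 2) ≤ b⁻¹ := by
  have hint : Integrable (fun x : ℝ => |x| * Real.exp (-b * x ^ 2)) := by
    have h := (integrable_mul_exp_neg_mul_sq hb).abs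
    refine h.congr (Filter.Eventually.of_forall fun x => ?_)
    simp only [abs_mul, abs_of_pos (Real.exp_pos _)]
  have h1 : ∫ x in Icc (-π) π, |x| * Real.exp (-b * x ^ 2)
      ≤ ∫ x : ℝ, |x| * Real.exp (-b * x ^ 2) := by
    apply setIntegral_le_integral hint
    exact Filter.Eventually.of_forall fun x => by positivity
  have h2 : ∫ x : ℝ, |x| * Real.exp (-b * x ^ 2) = 2 * ∫ x in Ioi (0 : ℝ),
      x * Real.exp (-b * x ^ 2) := by
    rw [← integral_comp_abs (f := fun x => x * Real.exp (-b * x ^ 2))]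
    congr 1 with x
    rw [sq_abs]
  rw [h2, integral_Ioi_mul_exp_neg_mul_sq hb] at h1
  calc ∫ x in Icc (-π) π, |x| * Real.exp (-b * x ^ 2) ≤ 2 * (2 * b)⁻¹ := h1
    _ = b⁻¹ := by field_simp

/-- For the continuous-time heat kernel `p` on `ℤ` generated by `γΔ`
(given by its Fourier representation), there is a constant `C` such that
`|p(t,z) - p(t,z+1)| ≤ C/(γ t)` for all `z ∈ ℤ`, `t > 0`. -/
theorem heat_kernel_gradient_bound (γ : ℝ) (hγ : 0 < γ) (p : ℝ → ℤ → ℝ)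
    (hp : ∀ (t : ℝ) (z : ℤ), p t z =
      (1 / (2 * Real.pi)) * ∫ ξ in Set.Icc (-Real.pi) Real.pi,
        Real.exp (-(2 * (1 - Real.cos ξ)) * γ * t) * Real.cos (ξ * (z : ℝ))) :
    ∃ C : ℝ, ∀ (z : ℤ) (t : ℝ), 0 < t → |p t z - p t (z + 1)| ≤ C / (γ * t) := by
  refine ⟨π / 8, fun z t ht => ?_⟩
  have hπ := Real.pi_pos
  have hπ2 : (0:ℝ) < π ^ 2 := by positivity
  set b : ℝ := 4 * γ * t / π ^ 2 with hbdef
  have hb : 0 < b := by positivity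
  set f : ℤ → ℝ → ℝ := fun w ξ =>
    Real.exp (-(2 * (1 - Real.cos ξ)) * γ * t) * Real.cos (ξ * (w : ℝ)) with hf
  have hcont : ∀ w : ℤ, Continuous (f w) := by
    intro w; rw [hf]; fun_prop
  have hintf : ∀ w : ℤ, IntegrableOn (f w) (Icc (-π) π) :=
    fun w => (hcont w).integrableOn_Icc
  have key : p t z - p t (z + 1)
      = (1 / (2 * π)) * ∫ ξ in Icc (-π) π, (f z ξ - f (z + 1) ξ) := by
    rw [hp t z, hp t (z + 1), ← mul_sub,
      integral_sub (hintf z) (hintf (z + 1))]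
  -- pointwise bound
  have hpt : ∀ ξ ∈ Icc (-π) π,
      |f z ξ - f (z + 1) ξ| ≤ |ξ| * Real.exp (-b * ξ ^ 2) := by
    intro ξ hξ
    have hξπ : |ξ| ≤ π := abs_le.mpr ⟨hξ.1, hξ.2⟩
    have hcos : Real.cos ξ ≤ 1 - 2 / π ^ 2 * ξ ^ 2 :=
      Real.cos_le_one_sub_mul_cos_sq hξπ
    have hexp : Real.exp (-(2 * (1 - Real.cos ξ)) * γ * t)
        ≤ Real.exp (-b * ξ ^ 2) := by
      apply Real.exp_le_exp.mpr
      have hcos2 : 2 * ξ ^ 2 ≤ (1 - Real.cos ξ) * π ^ 2 := by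
        have h := mul_le_mul_of_nonneg_right hcos hπ2.le
        have hdd : 2 / π ^ 2 * ξ ^ 2 * π ^ 2 = 2 * ξ ^ 2 := by
          field_simp
        nlinarith
      have heq : -b * ξ ^ 2 = -(4 * γ * t) * ξ ^ 2 / π ^ 2 := by
        rw [hbdef]; ring
      rw [heq, le_div_iff₀ hπ2]
      nlinarith [mul_pos hγ ht, mul_nonneg (mul_nonneg hγ.le ht.le) (sq_nonneg ξ)]
    have hcosdiff : |Real.cos (ξ * (z : ℝ)) - Real.cos (ξ * ((z : ℝ) + 1))| ≤ |ξ| := by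
      rw [Real.cos_sub_cos]
      have h1 : |Real.sin ((ξ * (z : ℝ) + ξ * ((z : ℝ) + 1)) / 2)| ≤ 1 :=
        Real.abs_sin_le_one _
      have h2 : |Real.sin ((ξ * (z : ℝ) - ξ * ((z : ℝ) + 1)) / 2)| ≤ |ξ| / 2 := by
        have heq2 : (ξ * (z : ℝ) - ξ * ((z : ℝ) + 1)) / 2 = -(ξ / 2) := by ring
        rw [heq2, Real.sin_neg, abs_neg]
        calc |Real.sin (ξ / 2)| ≤ |ξ / 2| := Real.abs_sin_le_abs
          _ = |ξ| / 2 := by rw [abs_div]; norm_num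
      calc |(-2) * Real.sin ((ξ * (z : ℝ) + ξ * ((z : ℝ) + 1)) / 2) *
            Real.sin ((ξ * (z : ℝ) - ξ * ((z : ℝ) + 1)) / 2)|
          = 2 * (|Real.sin ((ξ * (z : ℝ) + ξ * ((z : ℝ) + 1)) / 2)| *
            |Real.sin ((ξ * (z : ℝ) - ξ * ((z : ℝ) + 1)) / 2)|) := by
            rw [abs_mul, abs_mul]; norm_num; ring
        _ ≤ 2 * (1 * (|ξ| / 2)) := by
            apply mul_le_mul_of_nonneg_left _ (by norm_num)
            exact mul_le_mul h1 h2 (abs_nonneg _) zero_le_one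
        _ = |ξ| := by ring
    have hz1 : ((z + 1 : ℤ) : ℝ) = (z : ℝ) + 1 := by push_cast; ring
    calc |f z ξ - f (z + 1) ξ|
        = Real.exp (-(2 * (1 - Real.cos ξ)) * γ * t) *
          |Real.cos (ξ * (z : ℝ)) - Real.cos (ξ * ((z : ℝ) + 1))| := by
          rw [hf]; simp only [hz1, ← mul_sub, abs_mul, abs_of_pos (Real.exp_pos _)]
      _ ≤ Real.exp (-b * ξ ^ 2) * |ξ| :=
          mul_le_mul hexp hcosdiff (abs_nonneg _) (Real.exp_pos _).le
      _ = |ξ| * Real.exp (-b * ξ ^ 2) := mul_comm _ _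
  -- integral bound
  have hintg : IntegrableOn (fun ξ : ℝ => |ξ| * Real.exp (-b * ξ ^ 2)) (Icc (-π) π) := by
    have : Continuous fun ξ : ℝ => |ξ| * Real.exp (-b * ξ ^ 2) := by fun_prop
    exact this.integrableOn_Icc
  have habs : |∫ ξ in Icc (-π) π, (f z ξ - f (z + 1) ξ)|
      ≤ ∫ ξ in Icc (-π) π, |ξ| * Real.exp (-b * ξ ^ 2) := by
    calc |∫ ξ in Icc (-π) π, (f z ξ - f (z + 1) ξ)|
        ≤ ∫ ξ in Icc (-π) π, |f z ξ - f (z + 1) ξ| := by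
          simpa [Real.norm_eq_abs] using
            MeasureTheory.norm_integral_le_integral_norm
              (μ := volume.restrict (Icc (-π) π)) (fun ξ => f z ξ - f (z + 1) ξ)
      _ ≤ ∫ ξ in Icc (-π) π, |ξ| * Real.exp (-b * ξ ^ 2) := by
          apply setIntegral_mono_on ((hintf z).sub (hintf (z + 1))).abs hintg
            measurableSet_Icc hpt
  have hfinal : |p t z - p t (z + 1)| ≤ (1 / (2 * π)) * b⁻¹ := by
    rw [key, abs_mul, abs_of_pos (by positivity : (0:ℝ) < 1 / (2 * π))]
    exact mul_le_mul_of_nonneg_left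
      (habs.trans (integral_Icc_abs_mul_exp_neg_mul_sq hb)) (by positivity)
  refine hfinal.trans_eq ?_
  rw [hbdef]
  rw [eq_div_iff (by positivity : (γ : ℝ) * t ≠ 0)]
  field_simp
  ring
end

section
/- If f : ℤ → ℝ is even (f(x) = f(-x)) and nonincreasing on the nonnegative integers (f(x) ≥ f(x+1) for x ≥ 0), and f(t,·) solves the discrete heat equation ∂ₜf = γΔf with f(0,·) = f, then for every t > 0 the function f(t,·) is still even and nonincreasing on the nonnegative integers. -/
open scoped Nat
open MeasureTheory Real Complex

noncomputable def hkA (l : ℝ) (n : ℕ) : ℝ := ∑' m : ℕ, l ^ (2*m+n) / (m ! * (m+n)!)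

lemma hkA_term_nonneg {l : ℝ} (hl : 0 ≤ l) (n m : ℕ) :
    0 ≤ l ^ (2*m+n) / (m ! * (m+n)!) :=
  div_nonneg (pow_nonneg hl _) (by positivity)

lemma hkA_term_le {l : ℝ} (hl : 0 ≤ l) (n m : ℕ) :
    l ^ (2*m+n) / (m ! * (m+n)!) ≤ l ^ n * ((l^2) ^ m / m !) := by
  have hfn : (1:ℝ) ≤ ((m+n)! : ℝ) := by
    exact_mod_cast Nat.one_le_iff_ne_zero.mpr (Nat.factorial_ne_zero (m+n))
  have hfm : (0:ℝ) < (m ! : ℝ) := by exact_mod_cast Nat.factorial_pos m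
  have h1 : (m ! : ℝ) ≤ (m ! : ℝ) * ((m+n)! : ℝ) := by nlinarith
  have h2 : l ^ (2*m+n) = l ^ n * (l^2) ^ m := by
    rw [← pow_mul, ← pow_add]; ring_nf
  rw [h2, mul_div_assoc]
  refine mul_le_mul_of_nonneg_left ?_ (pow_nonneg hl n)
  exact div_le_div_of_nonneg_left (by positivity) hfm h1

lemma hkA_summable {l : ℝ} (hl : 0 ≤ l) (n : ℕ) :
    Summable (fun m : ℕ => l ^ (2*m+n) / (m ! * (m+n)!)) :=
  Summable.of_nonneg_of_le (hkA_term_nonneg hl n) (hkA_term_le hl n)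
    ((Real.summable_pow_div_factorial (l^2)).mul_left _)

lemma hkA_fact_ineq (m n : ℕ) : (m+1)! * (m+n)! ≤ m ! * (m+n+1)! := by
  have h : (m+1) ≤ (m+n+1) := by omega
  calc (m+1)! * (m+n)! = (m+1) * (m ! * (m+n)!) := by rw [Nat.factorial_succ]; ring
    _ ≤ (m+n+1) * (m ! * (m+n)!) := Nat.mul_le_mul_right _ h
    _ = m ! * (m+n+1)! := by rw [Nat.factorial_succ]; ring

lemma hkA_key {l : ℝ} (hl : 0 ≤ l) (n m : ℕ) :
    l ^ (2*m+(n+1)) / (m ! * (m+(n+1))!) ≤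
      (l ^ (2*m+n) / (m ! * (m+n)!) + l ^ (2*(m+1)+n) / ((m+1)! * ((m+1)+n)!)) / 2 := by
  set T : ℝ := l ^ (2*m+(n+1)) / (m ! * (m+(n+1))!) with hT
  set A : ℝ := l ^ (2*m+n) / (m ! * (m+n)!) with hA
  set B : ℝ := l ^ (2*(m+1)+n) / ((m+1)! * ((m+1)+n)!) with hB
  have hA0 : 0 ≤ A := hkA_term_nonneg hl n m
  have hB0 : 0 ≤ B := hkA_term_nonneg hl n (m+1)
  have hT0 : 0 ≤ T := hkA_term_nonneg hl (n+1) m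
  have hsq : T^2 ≤ A * B := by
    rw [hT, hA, hB, div_pow, div_mul_div_comm, ← pow_mul, ← pow_add]
    have hexp : (2*m+(n+1)) * 2 = (2*m+n) + (2*(m+1)+n) := by ring
    rw [hexp]
    apply div_le_div_of_nonneg_left (pow_nonneg hl _)
    · positivity
    · have hnat : (m ! * (m+n)!) * ((m+1)! * ((m+1)+n)!) ≤ (m ! * (m+(n+1))!) ^ 2 := by
        have h2 : m + (n+1) = m + n + 1 := by omega
        have h3 : (m+1) + n = m + n + 1 := by omega
        rw [h2, h3, sq]
        calc m ! * (m+n)! * ((m+1)! * (m+n+1)!)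
            = ((m+1)! * (m+n)!) * (m ! * (m+n+1)!) := by ring
          _ ≤ (m ! * (m+n+1)!) * (m ! * (m+n+1)!) :=
              Nat.mul_le_mul_right _ (hkA_fact_ineq m n)
      calc ((m ! : ℝ) * (m+n)!) * ((m+1)! * ((m+1)+n)!)
          = ((m ! * (m+n)!) * ((m+1)! * ((m+1)+n)!) : ℕ) := by push_cast; ring
        _ ≤ (((m ! * (m+(n+1))!) ^ 2 : ℕ) : ℝ) := by exact_mod_cast hnat
        _ = ((m ! : ℝ) * (m+(n+1))!) ^ 2 := by push_cast; ring
  nlinarith [sq_nonneg (A - B), sq_nonneg (A + B - 2*T)]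

lemma hkA_succ_le {l : ℝ} (hl : 0 ≤ l) (n : ℕ) : hkA l (n+1) ≤ hkA l n := by
  set a : ℕ → ℝ := fun m => l ^ (2*m+n) / (m ! * (m+n)!) with ha
  have hsa : Summable a := hkA_summable hl n
  have hsa1 : Summable (fun m => a (m+1)) := (summable_nat_add_iff 1).mpr hsa
  have h1 : hkA l (n+1) ≤ ∑' m, (a m + a (m+1))/2 := by
    apply Summable.tsum_le_tsum (fun m => hkA_key hl n m) (hkA_summable hl (n+1))
    exact (hsa.add hsa1).div_const 2
  have h2 : ∑' m : ℕ, (a m + a (m+1))/2 = ((∑' m, a m) + ∑' m, a (m+1))/2 := by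
    rw [tsum_div_const, Summable.tsum_add hsa hsa1]
  have h3 : ∑' m, a (m+1) ≤ ∑' m, a m := by
    have := Summable.sum_add_tsum_nat_add (f := a) 1 hsa
    have h0 : 0 ≤ a 0 := hkA_term_nonneg hl n 0
    simp only [Finset.sum_range_one] at this
    linarith
  calc hkA l (n+1) ≤ ((∑' m, a m) + ∑' m, a (m+1))/2 := by rw [← h2]; exact h1
    _ ≤ ∑' m, a m := by linarith
    _ = hkA l n := rfl

lemma hkA_anti {l : ℝ} (hl : 0 ≤ l) : Antitone (hkA l) :=
  antitone_nat_of_succ_le (fun n => hkA_succ_le hl n)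

lemma int_cos_k (k : ℤ) :
    ∫ ξ in Set.Icc (-π) π, Real.cos (k * ξ) = if k = 0 then 2*π else 0 := by
  rw [MeasureTheory.integral_Icc_eq_integral_Ioc,
    ← intervalIntegral.integral_of_le (by linarith [pi_pos] : -π ≤ π)]
  by_cases hk : k = 0
  · simp [hk, two_mul]
  · have hk' : (k : ℝ) ≠ 0 := Int.cast_ne_zero.mpr hk
    rw [if_neg hk]
    have := intervalIntegral.integral_comp_mul_left (a := -π) (b := π) (c := (k:ℝ))
      (f := fun x => Real.cos x) hk'
    rw [this, integral_cos]
    have h1 : Real.sin ((k:ℝ) * π) = 0 := Real.sin_int_mul_pi k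
    have h2 : Real.sin ((k:ℝ) * (-π)) = 0 := by
      rw [mul_neg, Real.sin_neg, h1, neg_zero]
    rw [h1, h2]; simp

lemma cos_integrableOn (j : ℤ) :
    MeasureTheory.IntegrableOn (fun ξ : ℝ => Real.cos ((j:ℝ) * ξ)) (Set.Icc (-π) π) :=
  (Real.continuous_cos.comp (continuous_const.mul continuous_id)).integrableOn_Icc

lemma int_coscos (k : ℤ) (n : ℕ) :
    ∫ ξ in Set.Icc (-π) π, Real.cos ((k:ℝ) * ξ) * Real.cos ((n:ℝ) * ξ)
      = (if k = (n:ℤ) then π else 0) + (if k = -(n:ℤ) then π else 0) := by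
  have hpt : ∀ ξ : ℝ, Real.cos ((k:ℝ)*ξ) * Real.cos ((n:ℝ)*ξ)
      = (Real.cos (((k - n : ℤ) : ℝ) * ξ) + Real.cos (((k + n : ℤ) : ℝ) * ξ))/2 := by
    intro ξ
    push_cast
    rw [sub_mul, add_mul, Real.cos_sub, Real.cos_add]
    ring
  simp only [hpt]
  rw [MeasureTheory.integral_div, MeasureTheory.integral_add (cos_integrableOn (k-n)) (cos_integrableOn (k+n)),
    int_cos_k, int_cos_k]
  have h1 : (k - (n:ℤ) = 0) ↔ (k = n) := sub_eq_zero
  have h2 : (k + (n:ℤ) = 0) ↔ (k = -(n:ℤ)) := by omega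
  by_cases hk1 : k = (n:ℤ) <;> by_cases hk2 : k = -(n:ℤ)
  · have hn : n = 0 := by omega
    simp [h1, h2, hk1, hk2, hn]; ring
  · have hn : n ≠ 0 := by omega
    have h3 : ((n:ℤ) = -(n:ℤ)) ↔ False := by constructor <;> intro h <;> [omega; exact h.elim]
    simp [h1, h2, hk1, hk2, hn, h3]
  · have hn : n ≠ 0 := by omega
    have h3 : ((-(n:ℤ)) = (n:ℤ)) ↔ False := by constructor <;> intro h <;> [omega; exact h.elim]
    have h5 : ((-(n:ℤ) - (n:ℤ)) = 0) ↔ False := by constructor <;> intro h <;> [omega; exact h.elim]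
    simp [h1, h2, hk1, hk2, hn, h3, h5]
    try ring
  · simp [h1, h2, hk1, hk2]

lemma exp_cos_expand {l : ℝ} (hl : 0 ≤ l) (ξ : ℝ) :
    Real.exp (2*l*Real.cos ξ) = ∑' p : ℕ × ℕ,
      l ^ (p.1 + p.2) / (p.1 ! * p.2 !) * Real.cos (((p.1:ℝ) - (p.2:ℝ)) * ξ) := by
  set u : ℂ := (l:ℂ) * Complex.exp ((ξ:ℂ) * Complex.I) with hu
  set v : ℂ := (l:ℂ) * Complex.exp (-(ξ:ℂ) * Complex.I) with hv
  have hnu : ‖u‖ = l := by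
    rw [hu, norm_mul]
    simp [Complex.norm_exp, _root_.abs_of_nonneg hl]
  have hnv : ‖v‖ = l := by
    rw [hv, norm_mul]
    simp [Complex.norm_exp, _root_.abs_of_nonneg hl]
  have hf : Summable (fun a : ℕ => ‖u ^ a / (a.factorial : ℂ)‖) := by
    have : ∀ a : ℕ, ‖u ^ a / (a.factorial : ℂ)‖ = l ^ a / a ! := by
      intro a
      rw [norm_div, norm_pow, hnu]
      congr 1
      simp [Complex.norm_natCast]
    rw [funext this]
    exact Real.summable_pow_div_factorial l
  have hg : Summable (fun b : ℕ => ‖v ^ b / (b.factorial : ℂ)‖) := by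
    have : ∀ b : ℕ, ‖v ^ b / (b.factorial : ℂ)‖ = l ^ b / b ! := by
      intro b
      rw [norm_div, norm_pow, hnv]
      congr 1
      simp [Complex.norm_natCast]
    rw [funext this]
    exact Real.summable_pow_div_factorial l
  have step1 : Complex.exp u * Complex.exp v = ∑' p : ℕ × ℕ, (u ^ p.1 / (p.1.factorial : ℂ)) * (v ^ p.2 / (p.2.factorial : ℂ)) := by
    rw [Complex.exp_eq_exp_ℂ, NormedSpace.exp_eq_tsum_div]
    exact tsum_mul_tsum_of_summable_norm hf hg
  have step2 : Complex.exp u * Complex.exp v = Complex.exp ((2*l*Real.cos ξ : ℝ) : ℂ) := by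
    rw [← Complex.exp_add]
    congr 1
    have h2c := Complex.two_cos (x := (ξ:ℂ))
    rw [hu, hv]
    push_cast [Complex.ofReal_cos]
    linear_combination -(l:ℂ) * h2c
  have hre : Real.exp (2*l*Real.cos ξ) = (Complex.exp ((2*l*Real.cos ξ : ℝ) : ℂ)).re :=
    (Complex.exp_ofReal_re _).symm
  rw [hre, ← step2, step1, Complex.re_tsum (summable_mul_of_summable_norm hf hg)]
  apply tsum_congr
  intro p
  obtain ⟨a, b⟩ := p
  have key : u ^ a / (a.factorial : ℂ) * (v ^ b / (b.factorial : ℂ))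
      = ((l ^ (a+b) / (a ! * b !) : ℝ) : ℂ) * Complex.exp (((((a:ℝ) - b) * ξ : ℝ)) * Complex.I) := by
    have hexp : Complex.exp ((a:ℂ)*((ξ:ℂ)*Complex.I)) * Complex.exp ((b:ℂ)*(-(ξ:ℂ)*Complex.I))
        = Complex.exp ((((a:ℝ) - b) * ξ : ℝ) * Complex.I) := by
      rw [← Complex.exp_add]
      congr 1
      push_cast
      ring
    calc (((l:ℂ) * Complex.exp ((ξ:ℂ) * Complex.I)) ^ a / (a.factorial : ℂ))
          * (((l:ℂ) * Complex.exp (-(ξ:ℂ) * Complex.I)) ^ b / (b.factorial : ℂ))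
        = ((l:ℂ)^a * (l:ℂ)^b) / ((a.factorial : ℂ) * (b.factorial : ℂ))
            * (Complex.exp ((a:ℂ)*((ξ:ℂ)*Complex.I)) * Complex.exp ((b:ℂ)*(-(ξ:ℂ)*Complex.I))) := by
          rw [mul_pow, mul_pow, ← Complex.exp_nat_mul, ← Complex.exp_nat_mul]
          ring
      _ = ((l ^ (a+b) / (a.factorial * b.factorial : ℝ) : ℝ) : ℂ)
            * Complex.exp ((((a:ℝ) - b) * ξ : ℝ) * Complex.I) := by
          rw [hexp, ← pow_add]
          push_cast
          ring
  rw [key, Complex.re_ofReal_mul, Complex.exp_ofReal_mul_I_re]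

lemma int_exp_cos {l : ℝ} (hl : 0 ≤ l) (n : ℕ) :
    ∫ ξ in Set.Icc (-π) π, Real.exp (2*l*Real.cos ξ) * Real.cos ((n:ℝ) * ξ)
      = 2 * π * hkA l n := by
  set w : ℕ × ℕ → ℝ := fun p => l ^ (p.1 + p.2) / (p.1 ! * p.2 !) with hwdef
  have hw_nonneg : ∀ p, 0 ≤ w p := fun p => div_nonneg (pow_nonneg hl _) (by positivity)
  have hw_sum : Summable w := by
    have h0 := Summable.mul_of_nonneg (Real.summable_pow_div_factorial l)
      (Real.summable_pow_div_factorial l)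
      (fun a => by positivity) (fun b => by positivity)
    apply h0.congr
    intro p
    rw [hwdef]
    simp only
    rw [pow_add, div_mul_div_comm]
  set F : ℕ × ℕ → ℝ → ℝ :=
    fun p ξ => w p * Real.cos (((p.1:ℝ) - (p.2:ℝ)) * ξ) * Real.cos ((n:ℝ) * ξ) with hFdef
  have hFcont : ∀ p, Continuous (F p) := by
    intro p
    apply Continuous.mul
    apply Continuous.mul continuous_const
    · exact Real.continuous_cos.comp (continuous_const.mul continuous_id)
    · exact Real.continuous_cos.comp (continuous_const.mul continuous_id)
  have hFint : ∀ p, IntegrableOn (F p) (Set.Icc (-π) π) := fun p => (hFcont p).integrableOn_Icc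
  have hFbound : ∀ p ξ, ‖F p ξ‖ ≤ w p := by
    intro p ξ
    rw [hFdef]
    simp only [norm_mul, Real.norm_eq_abs]
    calc |w p| * |Real.cos (((p.1:ℝ) - (p.2:ℝ)) * ξ)| * |Real.cos ((n:ℝ) * ξ)|
        ≤ |w p| * 1 * 1 := by
          gcongr <;> exact Real.abs_cos_le_one _
      _ = w p := by rw [mul_one, mul_one, _root_.abs_of_nonneg (hw_nonneg p)]
  have hvol : (volume (Set.Icc (-π) π)).toReal = 2 * π := by
    rw [Real.volume_Icc]
    rw [ENNReal.toReal_ofReal (by linarith [pi_pos])]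
    ring
  have hFnormint : ∀ p, ∫ ξ in Set.Icc (-π) π, ‖F p ξ‖ ≤ w p * (2*π) := by
    intro p
    calc ∫ ξ in Set.Icc (-π) π, ‖F p ξ‖ ≤ ∫ _ξ in Set.Icc (-π) π, w p := by
          apply integral_mono_of_nonneg (Filter.Eventually.of_forall (fun ξ => norm_nonneg _))
            ((integrableOn_const_iff (C := w p)).mpr (Or.inr (by rw [Real.volume_Icc]; exact ENNReal.ofReal_lt_top)))
          exact Filter.Eventually.of_forall (fun ξ => hFbound p ξ)
      _ = (volume (Set.Icc (-π) π)).toReal * w p := by rw [setIntegral_const]; rfl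
      _ = w p * (2*π) := by rw [hvol]; ring
  have hFnorm_sum : Summable (fun p => ∫ ξ in Set.Icc (-π) π, ‖F p ξ‖) := by
    apply Summable.of_nonneg_of_le (fun p => integral_nonneg (fun ξ => norm_nonneg _))
      hFnormint (hw_sum.mul_right _)
  have hswap : ∑' p, (∫ ξ in Set.Icc (-π) π, F p ξ)
      = ∫ ξ in Set.Icc (-π) π, ∑' p, F p ξ :=
    integral_tsum_of_summable_integral_norm hFint hFnorm_sum
  have hptw : ∀ ξ : ℝ, Real.exp (2*l*Real.cos ξ) * Real.cos ((n:ℝ) * ξ) = ∑' p, F p ξ := by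
    intro ξ
    rw [exp_cos_expand hl ξ, ← tsum_mul_right]
  have hterm : ∀ p : ℕ × ℕ, (∫ ξ in Set.Icc (-π) π, F p ξ)
      = w p * ((if ((p.1:ℤ) - p.2) = (n:ℤ) then π else 0)
             + (if ((p.1:ℤ) - p.2) = -(n:ℤ) then π else 0)) := by
    intro p
    have hcast : ∀ ξ : ℝ, F p ξ
        = w p * (Real.cos (((((p.1:ℤ) - p.2) : ℤ):ℝ) * ξ) * Real.cos ((n:ℝ) * ξ)) := by
      intro ξ
      rw [hFdef]
      simp only
      push_cast
      ring
    simp only [hcast]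
    rw [integral_const_mul, int_coscos]
  -- main computation
  rw [show (∫ ξ in Set.Icc (-π) π, Real.exp (2*l*Real.cos ξ) * Real.cos ((n:ℝ) * ξ))
      = ∫ ξ in Set.Icc (-π) π, ∑' p, F p ξ from integral_congr_ae (Filter.Eventually.of_forall (fun ξ => hptw ξ)) ,
    ← hswap]
  rw [tsum_congr hterm]
  have hsplit : ∀ p : ℕ×ℕ, w p * ((if ((p.1:ℤ)-p.2) = (n:ℤ) then π else 0)
        + (if ((p.1:ℤ)-p.2) = -(n:ℤ) then π else 0))
      = (w p * (if ((p.1:ℤ)-p.2) = (n:ℤ) then π else 0))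
        + (w p * (if ((p.1:ℤ)-p.2) = -(n:ℤ) then π else 0)) := fun p => by ring
  have hif_nonneg : ∀ (c : Prop) [Decidable c], (0:ℝ) ≤ (if c then π else 0) := by
    intro c _
    split
    · exact le_of_lt pi_pos
    · exact le_rfl
  have hif_le : ∀ (c : Prop) [Decidable c], (if c then π else (0:ℝ)) ≤ π := by
    intro c _
    split
    · exact le_rfl
    · exact le_of_lt pi_pos
  have hs1 : Summable (fun p : ℕ×ℕ => w p * (if ((p.1:ℤ)-p.2) = (n:ℤ) then π else 0)) := by
    apply Summable.of_nonneg_of_le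
      (fun p => mul_nonneg (hw_nonneg p) (hif_nonneg _))
      (fun p => mul_le_mul_of_nonneg_left (hif_le _) (hw_nonneg p))
      (hw_sum.mul_right π)
  have hs2 : Summable (fun p : ℕ×ℕ => w p * (if ((p.1:ℤ)-p.2) = -(n:ℤ) then π else 0)) := by
    apply Summable.of_nonneg_of_le
      (fun p => mul_nonneg (hw_nonneg p) (hif_nonneg _))
      (fun p => mul_le_mul_of_nonneg_left (hif_le _) (hw_nonneg p))
      (hw_sum.mul_right π)
  rw [tsum_congr hsplit, Summable.tsum_add hs1 hs2]
  -- second sum : b = a + n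
  have e2 : ∑' p : ℕ×ℕ, w p * (if ((p.1:ℤ)-p.2) = -(n:ℤ) then π else 0) = hkA l n * π := by
    have hinner : ∀ a : ℕ, Summable (fun b : ℕ => w (a,b) * (if ((a:ℤ)-b) = -(n:ℤ) then π else 0)) := by
      intro a
      apply summable_of_ne_finset_zero (s := {a+n})
      intro b hb
      simp only [Finset.mem_singleton] at hb
      rw [if_neg (by omega), mul_zero]
    rw [Summable.tsum_prod' hs2 hinner]
    have hab : ∀ a : ℕ, ∑' b : ℕ, w (a,b) * (if ((a:ℤ)-b) = -(n:ℤ) then π else 0)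
        = l ^ (2*a+n) / (a ! * (a+n)!) * π := by
      intro a
      rw [tsum_eq_single (a+n) (fun b hb => by rw [if_neg (by omega), mul_zero])]
      rw [if_pos (by omega)]
      rw [hwdef]
      simp only
      rw [show a + (a+n) = 2*a+n from by ring]
    rw [tsum_congr hab, tsum_mul_right]
    rfl
  -- first sum : a = b + n
  have e1 : ∑' p : ℕ×ℕ, w p * (if ((p.1:ℤ)-p.2) = (n:ℤ) then π else 0) = hkA l n * π := by
    set h : ℕ×ℕ → ℝ := fun p => w p * (if ((p.1:ℤ)-p.2) = (n:ℤ) then π else 0) with hhdef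
    have hswap2 : ∑' p : ℕ×ℕ, h p = ∑' q : ℕ×ℕ, h (q.2, q.1) := by
      exact ((Equiv.prodComm ℕ ℕ).tsum_eq h).symm
    have hs1' : Summable (fun q : ℕ×ℕ => h (q.2, q.1)) :=
      ((Equiv.prodComm ℕ ℕ).summable_iff (f := h)).mpr hs1
    have hinner : ∀ b : ℕ, Summable (fun a : ℕ => h (a, b)) := by
      intro b
      apply summable_of_ne_finset_zero (s := {b+n})
      intro a ha
      simp only [Finset.mem_singleton] at ha
      rw [hhdef]
      simp only
      rw [if_neg (by omega), mul_zero]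
    rw [hswap2, Summable.tsum_prod' hs1' (fun b => hinner b)]
    have hab : ∀ b : ℕ, ∑' a : ℕ, h (a, b) = l ^ (2*b+n) / (b ! * (b+n)!) * π := by
      intro b
      rw [tsum_eq_single (b+n) (fun a ha => by rw [hhdef]; simp only; rw [if_neg (by omega), mul_zero])]
      rw [hhdef]
      simp only
      rw [if_pos (by omega), hwdef]
      simp only
      rw [show (b+n) + b = 2*b+n from by ring, mul_comm ((b+n)! : ℝ) (b ! : ℝ)]
    rw [tsum_congr hab, tsum_mul_right]
    rfl
  rw [e1, e2, hkA]
  ring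

lemma p_formula (γ t : ℝ) (p : ℝ → ℤ → ℝ)
    (hp : ∀ (t : ℝ) (z : ℤ), p t z =
      (1 / (2 * Real.pi)) * ∫ ξ in Set.Icc (-Real.pi) Real.pi,
        Real.exp (-(2 * (1 - Real.cos ξ)) * γ * t) * Real.cos (ξ * (z : ℝ)))
    (hγt : 0 ≤ γ * t) (z : ℤ) :
    p t z = Real.exp (-(2*γ*t)) * hkA (γ*t) z.natAbs := by
  rw [hp t z]
  have hptw : ∀ ξ : ℝ, Real.exp (-(2*(1-Real.cos ξ))*γ*t) * Real.cos (ξ * (z:ℝ))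
      = Real.exp (-(2*γ*t)) * (Real.exp (2*(γ*t)*Real.cos ξ) * Real.cos ((z.natAbs : ℝ) * ξ)) := by
    intro ξ
    have hc : Real.cos (ξ * (z:ℝ)) = Real.cos ((z.natAbs:ℝ) * ξ) := by
      rcases le_or_gt 0 z with hz | hz
      · have hza : ((z.natAbs:ℝ)) = (z:ℝ) := by
          rw [Nat.cast_natAbs]
          exact_mod_cast _root_.abs_of_nonneg hz
        rw [hza, mul_comm]
      · have hza : ((z.natAbs:ℝ)) = -(z:ℝ) := by
          rw [Nat.cast_natAbs]
          exact_mod_cast abs_of_nonpos hz.le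
        rw [hza, show -(z:ℝ) * ξ = -(ξ * (z:ℝ)) from by ring, Real.cos_neg]
    rw [hc, show -(2*(1-Real.cos ξ))*γ*t = -(2*γ*t) + 2*(γ*t)*Real.cos ξ from by ring,
      Real.exp_add]
    ring
  rw [show (∫ ξ in Set.Icc (-π) π,
        Real.exp (-(2*(1-Real.cos ξ))*γ*t) * Real.cos (ξ * (z:ℝ)))
      = ∫ ξ in Set.Icc (-π) π,
        Real.exp (-(2*γ*t)) * (Real.exp (2*(γ*t)*Real.cos ξ) * Real.cos ((z.natAbs : ℝ) * ξ))
      from integral_congr_ae (Filter.Eventually.of_forall hptw)]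
  rw [MeasureTheory.integral_const_mul, int_exp_cos hγt z.natAbs]
  have hπ : π ≠ 0 := pi_ne_zero
  field_simp

/-- If `g : ℤ → ℝ` is even and nonincreasing on the nonnegative integers,
and `f(t,·)` is the solution of the discrete heat equation `∂ₜ f = γ Δ f`, `f(0,·) = g`,
given by the heat semigroup (convolution with the heat kernel `p` of `γΔ`),
then for every `t > 0`, `f(t,·)` is still even and nonincreasing on the nonnegative integers. -/
theorem heat_preserves_even_monotone (γ : ℝ) (hγ : 0 < γ) (p : ℝ → ℤ → ℝ)
    (hp : ∀ (t : ℝ) (z : ℤ), p t z =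
      (1 / (2 * Real.pi)) * ∫ ξ in Set.Icc (-Real.pi) Real.pi,
        Real.exp (-(2 * (1 - Real.cos ξ)) * γ * t) * Real.cos (ξ * (z : ℝ)))
    (g : ℤ → ℝ) (heven : ∀ x : ℤ, g x = g (-x))
    (hmono : ∀ x : ℤ, 0 ≤ x → g (x + 1) ≤ g x)
    (f : ℝ → ℤ → ℝ)
    (hf : ∀ (t : ℝ) (x : ℤ), f t x = ∑' z : ℤ, p t (x - z) * g z)
    (hsum : ∀ (t : ℝ) (x : ℤ), 0 ≤ t → Summable (fun z : ℤ => p t (x - z) * g z)) :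
    ∀ t : ℝ, 0 < t →
      (∀ x : ℤ, f t x = f t (-x)) ∧ (∀ x : ℤ, 0 ≤ x → f t (x + 1) ≤ f t x) := by
  intro t ht
  have hγt : 0 ≤ γ * t := le_of_lt (mul_pos hγ ht)
  have hP : ∀ z : ℤ, p t z = Real.exp (-(2*γ*t)) * hkA (γ*t) z.natAbs :=
    fun z => p_formula γ t p hp hγt z
  have hq_even : ∀ z : ℤ, p t z = p t (-z) := by
    intro z
    rw [hP, hP, Int.natAbs_neg]
  have hq_mono : ∀ u v : ℤ, u.natAbs ≤ v.natAbs → p t v ≤ p t u := by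
    intro u v h
    rw [hP, hP]
    exact mul_le_mul_of_nonneg_left (hkA_anti hγt h) (Real.exp_nonneg _)
  constructor
  · -- evenness
    intro x
    rw [hf t x, hf t (-x)]
    have h2 : ∑' z : ℤ, p t (-x - (-z)) * g (-z) = ∑' z : ℤ, p t (-x - z) * g z := by
      simpa using (Equiv.neg ℤ).tsum_eq (fun z => p t (-x - z) * g z)
    rw [← h2]
    apply tsum_congr
    intro z
    rw [show -x - -z = -(x - z) from by ring, ← hq_even (x - z), ← heven z]
  · -- monotonicity
    intro x hx
    have s1 : Summable (fun z : ℤ => p t (x - z) * g z) := hsum t x ht.le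
    have s2' : Summable (fun z : ℤ => p t (x + 1 - z) * g z) := hsum t (x+1) ht.le
    have s2 : Summable (fun z : ℤ => p t (x - z) * g (z+1)) := by
      have hcomp := s2'.comp_injective (add_left_injective (1:ℤ))
      apply hcomp.congr
      intro z
      simp only [Function.comp_apply]
      rw [show x + 1 - (z + 1) = x - z from by ring]
    have sd : Summable (fun z : ℤ => p t (x - z) * (g z - g (z+1))) := by
      apply (s1.sub s2).congr
      intro z
      ring
    have hre : ∑' z : ℤ, p t (x + 1 - z) * g z = ∑' z : ℤ, p t (x - z) * g (z+1) := by
      rw [← (Equiv.addRight (1:ℤ)).tsum_eq (fun z => p t (x + 1 - z) * g z)]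
      apply tsum_congr
      intro z
      simp only [Equiv.coe_addRight]
      rw [show x + 1 - (z + 1) = x - z from by ring]
    have hdiff : f t x - f t (x+1) = ∑' z : ℤ, p t (x - z) * (g z - g (z+1)) := by
      rw [hf t x, hf t (x+1), hre, ← Summable.tsum_sub s1 s2]
      apply tsum_congr
      intro z
      ring
    set d : ℤ → ℝ := fun z => p t (x - z) * (g z - g (z+1)) with hd
    have sdnat : Summable (fun m : ℕ => d (m : ℤ)) :=
      sd.comp_injective (fun a b hab => by exact_mod_cast hab)
    have sdneg : Summable (fun m : ℕ => d (-((m:ℤ) + 1))) := by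
      apply sd.comp_injective
      intro a b hab
      simpa using hab
    have hsplit : ∑' z : ℤ, d z = (∑' m : ℕ, d (m:ℤ)) + ∑' m : ℕ, d (-((m:ℤ)+1)) :=
      tsum_of_nat_of_neg_add_one sdnat sdneg
    have hpair : ∀ m : ℕ, 0 ≤ d (m:ℤ) + d (-((m:ℤ)+1)) := by
      intro m
      have hgneg1 : g (-((m:ℤ)+1)) = g ((m:ℤ)+1) := (heven ((m:ℤ)+1)).symm
      have hgneg2 : g (-(m:ℤ)) = g (m:ℤ) := (heven (m:ℤ)).symm
      have hh : 0 ≤ g (m:ℤ) - g ((m:ℤ)+1) :=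
        sub_nonneg.mpr (hmono (m:ℤ) (by positivity))
      have hker : p t (x + ((m:ℤ)+1)) ≤ p t (x - (m:ℤ)) := by
        apply hq_mono
        omega
      have hexpand : d (m:ℤ) + d (-((m:ℤ)+1))
          = (p t (x - (m:ℤ)) - p t (x + ((m:ℤ)+1))) * (g (m:ℤ) - g ((m:ℤ)+1)) := by
        rw [hd]
        simp only
        rw [show -((m:ℤ)+1) + 1 = -(m:ℤ) from by ring, hgneg1, hgneg2,
          show x - -((m:ℤ)+1) = x + ((m:ℤ)+1) from by ring]
        ring
      rw [hexpand]
      exact mul_nonneg (sub_nonneg.mpr hker) hh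
    have hD : 0 ≤ ∑' z : ℤ, d z := by
      rw [hsplit, ← Summable.tsum_add sdnat sdneg]
      exact tsum_nonneg hpair
    linarith [hdiff, hD]
end

section
/- Let p_M(t,x) = (1/(2M+1)) Σ_{y ∈ B(0,M)} p(t,x+y), where p is the discrete heat kernel. Then for any function u : ℤ → ℝ (with suitable summability), Σ_{z∈ℤ} p_M(t, z-x) u(z) = Σ_{z≥0} (p_M(t,z) - p_M(t,z+1)) (2z+1) ⟨u⟩_{x,z}, where ⟨u⟩_{x,z} = (1/(2z+1)) Σ_{y∈B(x,z)} u(y), and each coefficient p_M(t,z) - p_M(t,z+1) is nonnegative. -/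
namespace Plateau71

open Real Filter MeasureTheory



/-- number of ±1-walks of length `n` from `0` to `k` (for `k ≥ 0`), as a real. -/
def Bc (n k : ℕ) : ℝ := if k ≤ n ∧ (n - k) % 2 = 0 then ((n.choose ((n - k)/2)) : ℝ) else 0

lemma Bc_nonneg (n k : ℕ) : 0 ≤ Bc n k := by
  unfold Bc; split <;> positivity

lemma Bc_rec0 (n : ℕ) : Bc (n+1) 0 = 2 * Bc n 1 := by
  unfold Bc
  rcases Nat.even_or_odd n with ⟨m, hm⟩ | ⟨m, hm⟩
  · rw [if_neg (by omega), if_neg (by omega)]; ring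
  · -- n = 2m+1
    rw [if_pos (by omega), if_pos (by omega)]
    have h1 : (n + 1 - 0) / 2 = m + 1 := by omega
    have h2 : (n - 1) / 2 = m := by omega
    rw [h1, h2]
    subst hm
    have hs : (2*m+1).choose (m+1) = (2*m+1).choose m := by
      have := Nat.choose_symm (n := 2*m+1) (k := m+1) (by omega)
      simpa [show 2*m+1 - (m+1) = m by omega] using this.symm
    have : (2*m+1+1).choose (m+1) = (2*m+1).choose m + (2*m+1).choose (m+1) :=
      Nat.choose_succ_succ _ _
    rw [show 2*m+1+1 = 2*m+2 by ring] at this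
    push_cast [this, hs]
    ring

lemma Bc_rec (n k : ℕ) : Bc (n+1) (k+1) = Bc n (k+2) + Bc n k := by
  unfold Bc
  rcases Nat.lt_or_ge n k with h | h
  · rw [if_neg (by omega), if_neg (by omega), if_neg (by omega)]; ring
  rcases Nat.even_or_odd (n - k) with ⟨j, hj⟩ | ⟨j, hj⟩
  · -- n = k + 2j
    have hn : n = k + 2*j := by omega
    subst hn
    cases j with
    | zero =>
      rw [if_pos (by omega), if_neg (by omega), if_pos (by omega)]
      norm_num
    | succ m =>
      rw [if_pos (by omega), if_pos (by omega), if_pos (by omega)]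
      have e1 : (k + 2*(m+1) + 1 - (k+1)) / 2 = m + 1 := by omega
      have e2 : (k + 2*(m+1) - (k+2)) / 2 = m := by omega
      have e3 : (k + 2*(m+1) - k) / 2 = m + 1 := by omega
      rw [e1, e2, e3]
      have : (k + 2*(m+1) + 1).choose (m+1)
          = (k + 2*(m+1)).choose m + (k + 2*(m+1)).choose (m+1) := by
        have := Nat.choose_succ_succ (k + 2*(m+1)) m
        simpa using this
      push_cast [this]; ring
  · rw [if_neg (by omega), if_neg (by omega), if_neg (by omega)]; ring

lemma Bc_eq_zero (n k : ℕ) (h : ∀ b : ℕ, n ≠ 2*b + k) : Bc n k = 0 := by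
  unfold Bc
  rw [if_neg]
  rintro ⟨h1, h2⟩
  exact h ((n-k)/2) (by omega)

lemma Bc_apply (b k : ℕ) : Bc (2*b+k) k = ((2*b+k).choose b : ℝ) := by
  unfold Bc
  rw [if_pos (by omega), show (2*b+k-k)/2 = b by omega]


/-- `∫_{-π}^{π} cos^n ξ cos(kξ) dξ`. -/
noncomputable def cI (k n : ℕ) : ℝ :=
  ∫ ξ in Set.Icc (-π) π, (Real.cos ξ) ^ n * Real.cos (ξ * k)

lemma cI_integrand_integrable (k n : ℕ) :
    IntegrableOn (fun ξ : ℝ => (Real.cos ξ) ^ n * Real.cos (ξ * k)) (Set.Icc (-π) π) :=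
  (Continuous.mul (by continuity) (by continuity)).integrableOn_Icc

lemma cI_zero (k : ℕ) : cI k 0 = if k = 0 then 2 * π else 0 := by
  unfold cI
  rw [integral_Icc_eq_integral_Ioc, ← intervalIntegral.integral_of_le (by linarith [pi_pos])]
  rcases eq_or_ne k 0 with hk | hk
  · subst hk
    simp only [pow_zero, Nat.cast_zero, mul_zero, Real.cos_zero, one_mul]
    rw [intervalIntegral.integral_const]
    simp; ring
  · rw [if_neg hk]
    have hkR : (k : ℝ) ≠ 0 := Nat.cast_ne_zero.mpr hk
    have : ∀ ξ : ℝ, (Real.cos ξ) ^ 0 * Real.cos (ξ * k) = Real.cos ((k:ℝ) * ξ) := by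
      intro ξ; rw [pow_zero, one_mul, mul_comm]
    simp only [this]
    rw [intervalIntegral.integral_comp_mul_left (f := Real.cos) hkR]
    rw [integral_cos]
    have h1 : Real.sin ((k:ℝ) * π) = 0 := Real.sin_nat_mul_pi k
    have h2 : Real.sin ((k:ℝ) * (-π)) = 0 := by
      rw [mul_neg, Real.sin_neg, h1, neg_zero]
    rw [h1, h2]
    simp

lemma cI_succ_zero (n : ℕ) : cI 0 (n+1) = cI 1 n := by
  unfold cI
  apply integral_congr_ae
  apply Filter.EventuallyEq.of_eq
  funext ξ
  rw [Nat.cast_zero, mul_zero, Real.cos_zero, mul_one, Nat.cast_one, mul_one, pow_succ]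

lemma cI_succ (k n : ℕ) : cI (k+1) (n+1) = (cI (k+2) n + cI k n) / 2 := by
  have hpt : ∀ ξ : ℝ, (Real.cos ξ) ^ (n+1) * Real.cos (ξ * (k+1))
      = ((Real.cos ξ) ^ n * Real.cos (ξ * (k+2)) + (Real.cos ξ) ^ n * Real.cos (ξ * k)) / 2 := by
    intro ξ
    have hcc : Real.cos (ξ * (k+2)) + Real.cos (ξ * k)
        = 2 * Real.cos (ξ * (k+1)) * Real.cos ξ := by
      rw [Real.cos_add_cos]
      have e1 : (ξ * (k+2) + ξ * k) / 2 = ξ * (k+1) := by ring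
      have e2 : (ξ * (k+2) - ξ * k) / 2 = ξ := by ring
      rw [e1, e2]
    have : (Real.cos ξ) ^ n * (Real.cos (ξ * (k+2)) + Real.cos (ξ * k))
        = (Real.cos ξ) ^ n * (2 * Real.cos (ξ * (k+1)) * Real.cos ξ) := by rw [hcc]
    rw [pow_succ]
    nlinarith [this]
  unfold cI
  rw [← integral_add (cI_integrand_integrable (k+2) n) (cI_integrand_integrable k n),
    ← integral_div]
  apply integral_congr_ae
  apply Filter.EventuallyEq.of_eq
  funext ξ
  push_cast
  push_cast at hpt
  exact hpt ξ

lemma cI_closed (n k : ℕ) : cI k n = 2 * π * Bc n k / 2 ^ n := by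
  induction n generalizing k with
  | zero =>
    rw [cI_zero]
    unfold Bc
    rcases eq_or_ne k 0 with hk | hk
    · subst hk; rw [if_pos rfl, if_pos (by omega)]; norm_num
    · rw [if_neg hk, if_neg (by omega)]; norm_num
  | succ n ih =>
    cases k with
    | zero =>
      rw [cI_succ_zero, ih 1, Bc_rec0]
      ring
    | succ k =>
      rw [cI_succ, ih (k+2), ih k, Bc_rec]
      ring


/-- Bessel-type series `Σ_b lam^(2b+k)/(b!(b+k)!)`. -/
noncomputable def Fser (lam : ℝ) (k : ℕ) : ℝ :=
  ∑' b : ℕ, lam ^ (2*b+k) / ((Nat.factorial b : ℝ) * (Nat.factorial (b+k)))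

lemma Fser_term_le {lam : ℝ} (hlam : 0 ≤ lam) (k b : ℕ) :
    lam ^ (2*b+k) / ((Nat.factorial b : ℝ) * (Nat.factorial (b+k)))
      ≤ lam ^ k / (Nat.factorial k : ℝ) * ((lam^2) ^ b / (Nat.factorial b : ℝ)) := by
  have h1 : (Nat.factorial k : ℝ) * (Nat.factorial b : ℝ) ≤
      (Nat.factorial b : ℝ) * (Nat.factorial (b+k) : ℝ) := by
    have h2 : (Nat.factorial k : ℝ) ≤ (Nat.factorial (b+k) : ℝ) := by
      exact_mod_cast Nat.factorial_le (by omega)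
    have hb : (0:ℝ) < (Nat.factorial b : ℝ) := by positivity
    nlinarith
  calc lam ^ (2*b+k) / ((Nat.factorial b : ℝ) * (Nat.factorial (b+k)))
      ≤ lam ^ (2*b+k) / ((Nat.factorial k : ℝ) * (Nat.factorial b : ℝ)) := by
        gcongr
    _ = lam ^ k / (Nat.factorial k : ℝ) * ((lam^2) ^ b / (Nat.factorial b : ℝ)) := by
        rw [← pow_mul, show 2*b+k = b*2 + k by ring, pow_add]
        ring

lemma Fser_summable {lam : ℝ} (hlam : 0 ≤ lam) (k : ℕ) :
    Summable (fun b : ℕ => lam ^ (2*b+k) / ((Nat.factorial b : ℝ) * (Nat.factorial (b+k)))) :=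
  Summable.of_nonneg_of_le (fun b => by positivity) (fun b => Fser_term_le hlam k b)
    (((Real.summable_pow_div_factorial (lam^2)).mul_left _))

lemma Fser_nonneg {lam : ℝ} (hlam : 0 ≤ lam) (k : ℕ) : 0 ≤ Fser lam k :=
  tsum_nonneg (fun b => by positivity)

lemma Fser_le {lam : ℝ} (hlam : 0 ≤ lam) (k : ℕ) :
    Fser lam k ≤ lam ^ k / (Nat.factorial k : ℝ) * Real.exp (lam^2) := by
  have hexp : Real.exp (lam^2) = ∑' b : ℕ, (lam^2) ^ b / (Nat.factorial b : ℝ) := by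
    rw [Real.exp_eq_exp_ℝ, NormedSpace.exp_eq_tsum_div]
  rw [hexp, ← tsum_mul_left]
  exact Summable.tsum_le_tsum (fun b => Fser_term_le hlam k b) (Fser_summable hlam k)
    (((Real.summable_pow_div_factorial (lam^2)).mul_left _))

lemma key_ineq {lam Fb Fbk cb mk P : ℝ} (hlam : 0 ≤ lam) (hFb : 0 < Fb) (hFbk : 0 < Fbk)
    (hc : 0 < cb) (hcm : cb ≤ mk) (hP : 0 ≤ P) :
    P * lam / (Fb * (mk * Fbk))
      ≤ (P / (Fb * Fbk) + P * lam * lam / ((cb * Fb) * (mk * Fbk))) / 2 := by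
  have hm : 0 < mk := lt_of_lt_of_le hc hcm
  have h1 : 2*lam*cb ≤ mk*cb + lam*lam := by
    nlinarith [sq_nonneg (cb - lam), mul_le_mul_of_nonneg_right hcm hc.le]
  have h2 : 2*(P*lam*cb) ≤ P*(mk*cb) + P*(lam*lam) := by
    nlinarith [mul_le_mul_of_nonneg_left h1 hP]
  have eL : P*lam/(Fb*(mk*Fbk)) = (2*(P*lam*cb)) / (2*(cb*mk*(Fb*Fbk))) := by
    rw [div_eq_div_iff (by positivity) (by positivity)]; ring
  have eR : (P/(Fb*Fbk) + P*lam*lam/((cb*Fb)*(mk*Fbk)))/2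
      = (P*(mk*cb) + P*(lam*lam)) / (2*(cb*mk*(Fb*Fbk))) := by
    rw [div_add_div _ _ (by positivity) (by positivity), div_div,
      div_eq_div_iff (by positivity) (by positivity)]
    ring
  rw [eL, eR]
  gcongr

lemma Fser_succ_le {lam : ℝ} (hlam : 0 ≤ lam) (k : ℕ) : Fser lam (k+1) ≤ Fser lam k := by
  have hts : Summable (fun b : ℕ =>
      lam ^ (2*b+k) / ((Nat.factorial b : ℝ) * (Nat.factorial (b+k)))) :=
    Fser_summable hlam k
  set t : ℕ → ℝ := fun b => lam ^ (2*b+k) / ((Nat.factorial b : ℝ) * (Nat.factorial (b+k)))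
    with ht
  have htnn : ∀ b, 0 ≤ t b := fun b => by rw [ht]; positivity
  have hts' : Summable (fun b => t (b+1)) := (summable_nat_add_iff 1).2 hts
  have key : ∀ b : ℕ, lam ^ (2*b+(k+1)) / ((Nat.factorial b : ℝ) * (Nat.factorial (b+(k+1))))
      ≤ (t b + t (b+1)) / 2 := by
    intro b
    have hfb : (0:ℝ) < (Nat.factorial b : ℝ) := by positivity
    have hfbk : (0:ℝ) < (Nat.factorial (b+k) : ℝ) := by positivity
    have e1 : ((Nat.factorial (b+(k+1))) : ℝ) = ((b:ℝ)+(k:ℝ)+1) * (Nat.factorial (b+k) : ℝ) := by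
      rw [show b+(k+1) = (b+k)+1 by ring, Nat.factorial_succ]; push_cast; ring
    have e2 : ((Nat.factorial (b+1)) : ℝ) = ((b:ℝ)+1) * (Nat.factorial b : ℝ) := by
      rw [Nat.factorial_succ]; push_cast; ring
    have e3 : ((Nat.factorial (b+1+k)) : ℝ) = ((b:ℝ)+(k:ℝ)+1) * (Nat.factorial (b+k) : ℝ) := by
      rw [show b+1+k = (b+k)+1 by ring, Nat.factorial_succ]; push_cast; ring
    have p1 : lam ^ (2*b+(k+1)) = lam ^ (2*b+k) * lam := by
      rw [show 2*b+(k+1) = (2*b+k)+1 by ring, pow_succ]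
    have p2 : lam ^ (2*(b+1)+k) = lam ^ (2*b+k) * lam * lam := by
      rw [show 2*(b+1)+k = ((2*b+k)+1)+1 by ring, pow_succ, pow_succ]
    have ht2 : t (b+1) = lam ^ (2*b+k) * lam * lam
        / ((((b:ℝ)+1) * (Nat.factorial b : ℝ)) * ((((b:ℝ)+(k:ℝ)+1)) * (Nat.factorial (b+k) : ℝ))) := by
      rw [ht]
      simp only []
      rw [p2, e2, e3]
    have ht1 : t b = lam ^ (2*b+k) / ((Nat.factorial b : ℝ) * (Nat.factorial (b+k) : ℝ)) := rfl
    rw [ht1, ht2, p1, e1]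
    exact key_ineq hlam hfb hfbk (by positivity)
      (by push_cast; linarith [Nat.cast_nonneg (α := ℝ) k]) (by positivity)
  calc Fser lam (k+1) ≤ ∑' b : ℕ, (t b + t (b+1)) / 2 :=
        Summable.tsum_le_tsum key (Fser_summable hlam (k+1)) ((hts.add hts').div_const 2)
    _ = ((∑' b, t b) + ∑' b, t (b+1)) / 2 := by rw [tsum_div_const, Summable.tsum_add hts hts']
    _ ≤ ((∑' b, t b) + ∑' b, t b) / 2 := by
        gcongr (_ + ?_) / _
        exact Summable.tsum_le_tsum_of_inj (fun b => b + 1) (add_left_injective 1)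
          (fun c _ => htnn c) (fun b => le_rfl) hts' hts
    _ = ∑' b, t b := by ring
    _ = Fser lam k := rfl



lemma heat_repr (γ t : ℝ) (hγt : 0 ≤ γ * t) (k : ℕ) :
    (1/(2*π)) * (∫ ξ in Set.Icc (-π) π, Real.exp (-(2*(1 - Real.cos ξ))*γ*t) * Real.cos (ξ * k))
      = Real.exp (-(2*(γ*t))) * Fser (γ*t) k := by
  set s : ℝ := 2*(γ*t) with hs'
  have hs : 0 ≤ s := by rw [hs']; linarith
  set g : ℕ → ℝ → ℝ :=
    fun n ξ => Real.exp (-s) * (s^n / (Nat.factorial n : ℝ)) * ((Real.cos ξ)^n * Real.cos (ξ * k))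
    with hg
  -- Step A: pointwise expansion
  have hA : ∀ ξ : ℝ, Real.exp (-(2*(1 - Real.cos ξ))*γ*t) * Real.cos (ξ * k)
      = ∑' n : ℕ, g n ξ := by
    intro ξ
    have e0 : -(2*(1 - Real.cos ξ))*γ*t = -s + s * Real.cos ξ := by rw [hs']; ring
    rw [e0, Real.exp_add]
    have e1 : Real.exp (s * Real.cos ξ) = ∑' n : ℕ, (s * Real.cos ξ)^n / (Nat.factorial n : ℝ) := by
      rw [Real.exp_eq_exp_ℝ, NormedSpace.exp_eq_tsum_div]
    rw [e1, ← tsum_mul_left, ← tsum_mul_right]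
    congr 1; funext n
    rw [hg]; simp only []
    rw [mul_pow]; ring
  -- Step B: swap integral and sum
  have hInt : ∀ n : ℕ, IntegrableOn (g n) (Set.Icc (-π) π) := by
    intro n
    rw [hg]; simp only []
    exact (cI_integrand_integrable k n).const_mul _
  have hbound : ∀ n : ℕ, (∫ ξ in Set.Icc (-π) π, ‖g n ξ‖)
      ≤ Real.exp (-s) * (s^n / (Nat.factorial n : ℝ)) * (2*π) := by
    intro n
    have hc : ∀ ξ ∈ Set.Icc (-π) π, ‖g n ξ‖ ≤ Real.exp (-s) * (s^n / (Nat.factorial n : ℝ)) := by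
      intro ξ _
      rw [hg]; simp only []
      rw [norm_mul, norm_mul]
      have h1 : ‖Real.exp (-s)‖ = Real.exp (-s) := Real.norm_of_nonneg (Real.exp_pos _).le
      have h2 : ‖s^n / (Nat.factorial n : ℝ)‖ = s^n / (Nat.factorial n : ℝ) :=
        Real.norm_of_nonneg (by positivity)
      have h3 : ‖(Real.cos ξ)^n * Real.cos (ξ * k)‖ ≤ 1 := by
        rw [norm_mul, norm_pow]
        have := Real.abs_cos_le_one ξ
        have := Real.abs_cos_le_one (ξ * k)
        calc ‖Real.cos ξ‖^n * ‖Real.cos (ξ * k)‖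
            ≤ 1^n * 1 := by
              apply mul_le_mul (pow_le_pow_left₀ (norm_nonneg _) (by rwa [Real.norm_eq_abs]) n)
                (by rwa [Real.norm_eq_abs]) (norm_nonneg _) (by norm_num)
          _ = 1 := by norm_num
      calc ‖Real.exp (-s)‖ * ‖s^n / (Nat.factorial n : ℝ)‖ * ‖(Real.cos ξ)^n * Real.cos (ξ * k)‖
          ≤ ‖Real.exp (-s)‖ * ‖s^n / (Nat.factorial n : ℝ)‖ * 1 :=
            mul_le_mul_of_nonneg_left h3 (by positivity)
        _ = Real.exp (-s) * (s^n / (Nat.factorial n : ℝ)) := by rw [h1, h2, mul_one]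
    calc (∫ ξ in Set.Icc (-π) π, ‖g n ξ‖)
        ≤ ∫ _ in Set.Icc (-π) π, Real.exp (-s) * (s^n / (Nat.factorial n : ℝ)) := by
          apply setIntegral_mono_on ((hInt n).norm)
            (integrableOn_const (by rw [Real.volume_Icc]; exact ENNReal.ofReal_ne_top))
            measurableSet_Icc hc
      _ = Real.exp (-s) * (s^n / (Nat.factorial n : ℝ)) * (2*π) := by
          rw [setIntegral_const, smul_eq_mul, measureReal_def, Real.volume_Icc,
            ENNReal.toReal_ofReal (by linarith [pi_pos])]
          ring
  have hSumInt : Summable (fun n : ℕ => ∫ ξ in Set.Icc (-π) π, ‖g n ξ‖) := by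
    apply Summable.of_nonneg_of_le
      (fun n => integral_nonneg (fun ξ => norm_nonneg _)) hbound
    exact ((Real.summable_pow_div_factorial s).mul_left (Real.exp (-s))).mul_right (2*π)
  have hswap : (∫ ξ in Set.Icc (-π) π, ∑' n : ℕ, g n ξ) = ∑' n : ℕ, ∫ ξ in Set.Icc (-π) π, g n ξ :=
    (integral_tsum_of_summable_integral_norm hInt hSumInt).symm
  -- Step C: compute each integral
  have hC : ∀ n : ℕ, (∫ ξ in Set.Icc (-π) π, g n ξ)
      = Real.exp (-s) * (s^n / (Nat.factorial n : ℝ)) * (2 * π * Bc n k / 2^n) := by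
    intro n
    rw [hg]; simp only []
    rw [integral_const_mul, ← cI_closed]
    rfl
  have hπ : (π : ℝ) ≠ 0 := Real.pi_ne_zero
  calc (1/(2*π)) * (∫ ξ in Set.Icc (-π) π, Real.exp (-(2*(1 - Real.cos ξ))*γ*t) * Real.cos (ξ * k))
      = (1/(2*π)) * ∑' n : ℕ, ∫ ξ in Set.Icc (-π) π, g n ξ := by
        rw [← hswap]; congr 1
        apply integral_congr_ae; apply Filter.EventuallyEq.of_eq; funext ξ; exact hA ξ
    _ = ∑' n : ℕ, Real.exp (-s) * ((γ*t)^n / (Nat.factorial n : ℝ) * Bc n k) := by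
        rw [← tsum_mul_left]
        congr 1; funext n
        rw [hC n]
        have h2n : ((2:ℝ))^n ≠ 0 := by positivity
        have e : (γ*t)^n = s^n / 2^n := by
          rw [hs', mul_pow]; field_simp; ring
        rw [e]
        field_simp
    _ = Real.exp (-s) * ∑' n : ℕ, ((γ*t)^n / (Nat.factorial n : ℝ) * Bc n k) := tsum_mul_left
    _ = Real.exp (-(2*(γ*t))) * Fser (γ*t) k := by
        rw [hs']
        congr 1
        -- Step D: reindex
        have hinj : Function.Injective (fun b : ℕ => 2*b + k) := by
          intro a b hab; simp only [] at hab; omega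
        have hsupp : Function.support (fun n : ℕ => (γ*t)^n / (Nat.factorial n : ℝ) * Bc n k)
            ⊆ Set.range (fun b : ℕ => 2*b + k) := by
          intro n hn
          simp only [Function.mem_support] at hn
          by_contra hni
          exact hn (by rw [Bc_eq_zero n k (fun b hb => hni ⟨b, hb.symm⟩), mul_zero])
        rw [← Function.Injective.tsum_eq hinj hsupp]
        unfold Fser
        congr 1; funext b
        show (γ*t)^(2*b+k) / (Nat.factorial (2*b+k) : ℝ) * Bc (2*b+k) k
          = (γ*t)^(2*b+k) / ((Nat.factorial b : ℝ) * (Nat.factorial (b+k)))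
        rw [Bc_apply]
        have hfact : ((2*b+k).choose b : ℝ) * ((Nat.factorial b : ℝ) * (Nat.factorial (b+k) : ℝ))
            = (Nat.factorial (2*b+k) : ℝ) := by
          have := Nat.choose_mul_factorial_mul_factorial (n := 2*b+k) (k := b) (by omega)
          rw [show 2*b+k-b = b+k by omega] at this
          push_cast [← this]
          ring
        have h1 : (0:ℝ) < (Nat.factorial (2*b+k) : ℝ) := by positivity
        have h2 : (0:ℝ) < (Nat.factorial b : ℝ) * (Nat.factorial (b+k) : ℝ) := by positivity
        rw [div_mul_eq_mul_div, div_eq_div_iff h1.ne' h2.ne', ← hfact]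
        ring


end Plateau71

/-- Empirical average of `u` over the box `B(x,L) = [x-L, x+L] ∩ ℤ`. -/
noncomputable def boxAvg (u : ℤ → ℝ) (x : ℤ) (L : ℕ) : ℝ :=
  (∑ y ∈ Finset.Icc (x - (L : ℤ)) (x + (L : ℤ)), u y) / (2 * (L : ℝ) + 1)

/-- layer-cake decomposition of the averaged heat kernel `p_M`:
`Σ_z p_M(t, z-x) u(z) = Σ_{z≥0} (p_M(t,z) - p_M(t,z+1)) (2z+1) ⟨u⟩_{x,z}`,
with each coefficient `p_M(t,z) - p_M(t,z+1)` nonnegative. -/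
theorem plateau_decomposition (γ : ℝ) (hγ : 0 < γ) (p : ℝ → ℤ → ℝ)
    (hp : ∀ (t : ℝ) (z : ℤ), p t z =
      (1 / (2 * Real.pi)) * ∫ ξ in Set.Icc (-Real.pi) Real.pi,
        Real.exp (-(2 * (1 - Real.cos ξ)) * γ * t) * Real.cos (ξ * (z : ℝ)))
    (M : ℕ) (pM : ℝ → ℤ → ℝ)
    (hpM : ∀ (t : ℝ) (z : ℤ), pM t z =
      (∑ y ∈ Finset.Icc (-(M : ℤ)) (M : ℤ), p t (z + y)) / (2 * (M : ℝ) + 1))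
    (u : ℤ → ℝ) (hu : (Function.support u).Finite)
    (t : ℝ) (ht : 0 ≤ t) (x : ℤ) :
    ((∑' z : ℤ, pM t (z - x) * u z)
        = ∑' z : ℕ, (pM t (z : ℤ) - pM t ((z : ℤ) + 1)) * (2 * (z : ℝ) + 1) * boxAvg u x z)
    ∧ ∀ z : ℕ, 0 ≤ pM t (z : ℤ) - pM t ((z : ℤ) + 1) := by
  classical
  open Real Filter MeasureTheory Plateau71 in
  have hπ := Real.pi_pos
  have hlam : 0 ≤ γ * t := mul_nonneg hγ.le ht
  -- p at natural arguments is given by the Bessel-type series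
  have hpk : ∀ k : ℕ, p t (k : ℤ) = Real.exp (-(2*(γ*t))) * Plateau71.Fser (γ*t) k := by
    intro k
    rw [hp, ← Plateau71.heat_repr γ t hlam k]
    congr 1
  have p_even : ∀ z : ℤ, p t (-z) = p t z := by
    intro z
    rw [hp, hp]
    congr 1
    apply MeasureTheory.integral_congr_ae
    apply Filter.EventuallyEq.of_eq
    funext ξ
    congr 1
    push_cast
    rw [mul_neg, Real.cos_neg]
  have p_abs : ∀ z : ℤ, p t z = p t (z.natAbs : ℤ) := by
    intro z
    rcases Int.natAbs_eq z with h | h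
    · rw [← h]
    · conv_lhs => rw [h]
      rw [p_even]
  have p_nonneg : ∀ z : ℤ, 0 ≤ p t z := by
    intro z
    rw [p_abs z, hpk]
    exact mul_nonneg (Real.exp_pos _).le (Plateau71.Fser_nonneg hlam _)
  have p_anti : ∀ a b : ℕ, a ≤ b → p t (b:ℤ) ≤ p t (a:ℤ) := by
    intro a b hab
    rw [hpk, hpk]
    apply mul_le_mul_of_nonneg_left _ (Real.exp_pos _).le
    have key : ∀ n : ℕ, Plateau71.Fser (γ*t) (a+n) ≤ Plateau71.Fser (γ*t) a := by
      intro n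
      induction n with
      | zero => exact le_rfl
      | succ m ih =>
        calc Plateau71.Fser (γ*t) (a+(m+1)) = Plateau71.Fser (γ*t) ((a+m)+1) := by ring_nf
          _ ≤ Plateau71.Fser (γ*t) (a+m) := Plateau71.Fser_succ_le hlam _
          _ ≤ Plateau71.Fser (γ*t) a := ih
    have hb : b = a + (b - a) := by omega
    rw [hb]
    exact key _
  have p_tendsto : Filter.Tendsto (fun k : ℕ => p t (k:ℤ)) Filter.atTop (nhds 0) := by
    apply squeeze_zero (fun k => p_nonneg _)
      (g := fun k : ℕ => Real.exp (-(2*(γ*t))) * ((γ*t)^k / (Nat.factorial k : ℝ)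
        * Real.exp ((γ*t)^2)))
    · intro k
      rw [hpk]
      exact mul_le_mul_of_nonneg_left (Plateau71.Fser_le hlam k) (Real.exp_pos _).le
    · have h0 := (Real.summable_pow_div_factorial (γ*t)).tendsto_atTop_zero
      have := (h0.mul_const (Real.exp ((γ*t)^2))).const_mul (Real.exp (-(2*(γ*t))))
      simpa using this
  -- basic properties of pM
  have pM_even : ∀ z : ℤ, pM t (-z) = pM t z := by
    intro z
    rw [hpM, hpM]
    congr 1
    apply Finset.sum_equiv (Equiv.neg ℤ)
    · intro y
      simp only [Finset.mem_Icc, Equiv.neg_apply]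
      omega
    · intro y _
      simp only [Equiv.neg_apply]
      rw [show z + -y = -(-z + y) by ring, p_even]
  have pM_abs : ∀ z : ℤ, pM t z = pM t (z.natAbs : ℤ) := by
    intro z
    rcases Int.natAbs_eq z with h | h
    · rw [← h]
    · conv_lhs => rw [h]
      rw [pM_even]
  have pM_diff : ∀ z : ℤ,
      pM t z - pM t (z+1) = (p t (z - M) - p t (z + M + 1)) / (2*(M:ℝ)+1) := by
    intro z
    rw [hpM, hpM, div_sub_div_same]
    congr 1
    have h1 : ∑ y ∈ Finset.Icc (-(M:ℤ)) M, p t (z+1+y)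
        = ∑ y ∈ Finset.Icc (-(M:ℤ)+1) ((M:ℤ)+1), p t (z+y) := by
      apply Finset.sum_equiv (Equiv.addRight (1:ℤ))
      · intro y
        simp only [Finset.mem_Icc, Equiv.coe_addRight]
        omega
      · intro y _
        simp only [Equiv.coe_addRight]
        congr 1
        ring
    rw [h1]
    have e1 : Finset.Icc (-(M:ℤ)) M = insert (-(M:ℤ)) (Finset.Icc (-(M:ℤ)+1) M) := by
      ext w
      simp only [Finset.mem_Icc, Finset.mem_insert]
      omega
    have e2 : Finset.Icc (-(M:ℤ)+1) ((M:ℤ)+1) = insert ((M:ℤ)+1) (Finset.Icc (-(M:ℤ)+1) M) := by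
      ext w
      simp only [Finset.mem_Icc, Finset.mem_insert]
      omega
    rw [e1, e2, Finset.sum_insert (by simp only [Finset.mem_Icc]; omega),
      Finset.sum_insert (by simp only [Finset.mem_Icc]; omega)]
    rw [show z + -(M:ℤ) = z - M by ring, show z + ((M:ℤ)+1) = z + M + 1 by ring]
    ring
  have hcoef : ∀ z : ℕ, 0 ≤ pM t (z:ℤ) - pM t ((z:ℤ)+1) := by
    intro z
    rw [pM_diff]
    apply div_nonneg _ (by positivity)
    have hzM : ((z:ℤ) - M).natAbs ≤ z + M + 1 := by omega
    have h1 : p t ((z:ℤ) - M) = p t ((((z:ℤ) - M).natAbs : ℕ) : ℤ) := p_abs _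
    have h2 : p t ((z:ℤ) + M + 1) = p t (((z + M + 1 : ℕ) : ℕ) : ℤ) := by
      congr 1
    rw [h1, h2, sub_nonneg]
    exact p_anti _ _ hzM
  have pM_nonneg : ∀ z : ℤ, 0 ≤ pM t z := by
    intro z
    rw [hpM]
    apply div_nonneg _ (by positivity)
    exact Finset.sum_nonneg (fun y _ => p_nonneg _)
  have pM_le : ∀ k : ℕ, M ≤ k → pM t (k:ℤ) ≤ p t (((k - M : ℕ) : ℕ) : ℤ) := by
    intro k hk
    rw [hpM, div_le_iff₀ (by positivity)]
    calc ∑ y ∈ Finset.Icc (-(M:ℤ)) M, p t ((k:ℤ)+y)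
        ≤ ∑ _y ∈ Finset.Icc (-(M:ℤ)) M, p t (((k - M : ℕ) : ℕ) : ℤ) := by
          apply Finset.sum_le_sum
          intro y hy
          simp only [Finset.mem_Icc] at hy
          have h1 : p t ((k:ℤ)+y) = p t ((((k:ℤ)+y).natAbs : ℕ) : ℤ) := p_abs _
          rw [h1]
          apply p_anti
          omega
      _ = p t (((k - M : ℕ) : ℕ) : ℤ) * (2*(M:ℝ)+1) := by
          rw [Finset.sum_const, Int.card_Icc,
            show (((M:ℤ) + 1 - -(M:ℤ)).toNat : ℕ) = 2*M+1 by omega, nsmul_eq_mul]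
          push_cast
          ring
  have pM_tendsto : Filter.Tendsto (fun k : ℕ => pM t (k:ℤ)) Filter.atTop (nhds 0) := by
    apply squeeze_zero' (Filter.Eventually.of_forall (fun k => pM_nonneg _))
      (g := fun k : ℕ => p t (((k - M : ℕ) : ℕ) : ℤ))
    · filter_upwards [Filter.eventually_ge_atTop M] with k hk
      exact pM_le k hk
    · exact p_tendsto.comp (tendsto_sub_atTop_nat M)
  -- the telescoping coefficients
  set d : ℕ → ℝ := fun k => pM t (k:ℤ) - pM t ((k:ℤ)+1) with hd
  have hdsum_partial : ∀ n : ℕ, ∑ i ∈ Finset.range n, d i = pM t 0 - pM t (n:ℤ) := by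
    intro n
    have hterm : ∀ i : ℕ, d i
        = (fun j : ℕ => pM t (j:ℤ)) i - (fun j : ℕ => pM t (j:ℤ)) (i+1) := by
      intro i
      rw [hd]
      norm_cast
    rw [Finset.sum_congr rfl (fun i _ => hterm i), Finset.sum_range_sub']
    norm_num
  have hdHasSum : HasSum d (pM t 0) := by
    rw [hasSum_iff_tendsto_nat_of_nonneg (fun i => hcoef i)]
    have : (fun n : ℕ => ∑ i ∈ Finset.range n, d i) = fun n : ℕ => pM t 0 - pM t (n:ℤ) :=
      funext hdsum_partial
    rw [this]
    simpa using (tendsto_const_nhds.sub pM_tendsto)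
  -- finite support bookkeeping
  set T : Finset ℤ := hu.toFinset with hT'
  have hTmem : ∀ z, z ∉ T → u z = 0 := by
    intro z hz
    rw [hT', Set.Finite.mem_toFinset, Function.mem_support, not_not] at hz
    exact hz
  set R : ℕ := T.sup (fun z => (z - x).natAbs) with hR'
  have hRT : ∀ z ∈ T, (z - x).natAbs ≤ R := fun z hz =>
    Finset.le_sup (f := fun z => (z - x).natAbs) hz
  set S : ℝ := ∑ z ∈ T, u z with hS'
  set A : ℕ → ℝ := fun k => ∑ y ∈ Finset.Icc (x - (k:ℤ)) (x + (k:ℤ)), u y with hA'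
  have hA : ∀ k : ℕ, A k = ∑ z ∈ T.filter (fun z => (z - x).natAbs ≤ k), u z := by
    intro k
    rw [hA']
    simp only []
    rw [← Finset.sum_filter_of_ne (p := fun z => z ∈ T)
      (fun y _ hy => by by_contra h; exact hy (hTmem y h))]
    congr 1
    ext z
    simp only [Finset.mem_filter, Finset.mem_Icc]
    constructor
    · rintro ⟨⟨h1, h2⟩, h3⟩
      exact ⟨h3, by omega⟩
    · rintro ⟨h3, h4⟩
      exact ⟨by omega, h3⟩
  have hAS : ∀ k : ℕ, R ≤ k → A k = S := by
    intro k hk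
    rw [hA k, hS', Finset.filter_true_of_mem (fun z hz => le_trans (hRT z hz) hk)]
  have hL : (∑' z : ℤ, pM t (z - x) * u z) = ∑ z ∈ T, pM t (z - x) * u z :=
    tsum_eq_sum (fun z hz => by rw [hTmem z hz, mul_zero])
  -- Abel summation over the finite window
  have step1 : ∀ z ∈ T, pM t (z - x)
      = (∑ k ∈ Finset.range R, if (z - x).natAbs ≤ k then d k else 0) + pM t (R:ℤ) := by
    intro z hz
    have hmR : (z - x).natAbs ≤ R := hRT z hz
    have e0 : pM t (z - x) = pM t (((z - x).natAbs : ℕ) : ℤ) := pM_abs _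
    have e1 : (∑ k ∈ Finset.range R, if (z - x).natAbs ≤ k then d k else 0)
        = ∑ k ∈ Finset.Ico ((z - x).natAbs) R, d k := by
      rw [← Finset.sum_filter]
      congr 1
      ext k
      simp only [Finset.mem_filter, Finset.mem_range, Finset.mem_Ico]
      omega
    have e2 : ∑ k ∈ Finset.Ico ((z - x).natAbs) R, d k
        = pM t (((z - x).natAbs : ℕ) : ℤ) - pM t (R:ℤ) := by
      rw [Finset.sum_Ico_eq_sub _ hmR, hdsum_partial, hdsum_partial]
      ring
    rw [e0, e1, e2]
    ring
  have hAbel : (∑ z ∈ T, pM t (z - x) * u z)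
      = (∑ k ∈ Finset.range R, d k * A k) + pM t (R:ℤ) * S := by
    calc (∑ z ∈ T, pM t (z - x) * u z)
        = ∑ z ∈ T, ((∑ k ∈ Finset.range R, if (z - x).natAbs ≤ k then d k else 0) * u z
            + pM t (R:ℤ) * u z) := by
          apply Finset.sum_congr rfl
          intro z hz
          rw [step1 z hz]
          ring
      _ = (∑ z ∈ T, (∑ k ∈ Finset.range R, if (z - x).natAbs ≤ k then d k else 0) * u z)
            + ∑ z ∈ T, pM t (R:ℤ) * u z := Finset.sum_add_distrib
      _ = (∑ k ∈ Finset.range R, d k * A k) + pM t (R:ℤ) * S := by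
          congr 1
          · calc (∑ z ∈ T, (∑ k ∈ Finset.range R, if (z - x).natAbs ≤ k then d k else 0) * u z)
                = ∑ z ∈ T, ∑ k ∈ Finset.range R,
                    (if (z - x).natAbs ≤ k then d k * u z else 0) := by
                  apply Finset.sum_congr rfl
                  intro z _
                  rw [Finset.sum_mul]
                  apply Finset.sum_congr rfl
                  intro k _
                  rw [ite_mul, zero_mul]
              _ = ∑ k ∈ Finset.range R, ∑ z ∈ T,
                    (if (z - x).natAbs ≤ k then d k * u z else 0) := Finset.sum_comm
              _ = ∑ k ∈ Finset.range R, d k * A k := by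
                  apply Finset.sum_congr rfl
                  intro k _
                  rw [← Finset.sum_filter, ← Finset.mul_sum, ← hA k]
          · rw [← Finset.mul_sum, hS']
  -- assemble the right-hand side as a convergent series
  have hsummand : ∀ k : ℕ,
      (pM t (k:ℤ) - pM t ((k:ℤ)+1)) * (2*(k:ℝ)+1) * boxAvg u x k = d k * A k := by
    intro k
    have h21 : (2*(k:ℝ)+1) ≠ 0 := by positivity
    unfold boxAvg
    rw [hd, hA']
    simp only []
    field_simp
  have hg1 : HasSum (fun k : ℕ => d k * (A k - S))
      (∑ k ∈ Finset.range R, d k * (A k - S)) := by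
    apply hasSum_sum_of_ne_finset_zero
    intro k hk
    rw [hAS k (by simpa [Finset.mem_range, not_lt] using hk), sub_self, mul_zero]
  have hg2 : HasSum (fun k : ℕ => d k * S) (pM t 0 * S) := hdHasSum.mul_right S
  have hgsum : HasSum (fun k : ℕ => d k * A k)
      ((∑ k ∈ Finset.range R, d k * (A k - S)) + pM t 0 * S) := by
    have h := hg1.add hg2
    have he : (fun k : ℕ => d k * (A k - S) + d k * S) = fun k : ℕ => d k * A k :=
      funext (fun k => by ring)
    rwa [he] at h
  have hval : (∑ k ∈ Finset.range R, d k * (A k - S)) + pM t 0 * S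
      = (∑ k ∈ Finset.range R, d k * A k) + pM t (R:ℤ) * S := by
    have hsum_d : ∑ k ∈ Finset.range R, d k = pM t 0 - pM t (R:ℤ) := hdsum_partial R
    have h1 : ∑ k ∈ Finset.range R, d k * (A k - S)
        = (∑ k ∈ Finset.range R, d k * A k) - (∑ k ∈ Finset.range R, d k) * S := by
      rw [Finset.sum_mul, ← Finset.sum_sub_distrib]
      apply Finset.sum_congr rfl
      intro k _
      ring
    rw [h1, hsum_d]
    ring
  refine ⟨?_, hcoef⟩
  calc (∑' z : ℤ, pM t (z - x) * u z)
      = (∑ k ∈ Finset.range R, d k * A k) + pM t (R:ℤ) * S := by rw [hL, hAbel]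
    _ = (∑ k ∈ Finset.range R, d k * (A k - S)) + pM t 0 * S := hval.symm
    _ = ∑' k : ℕ, d k * A k := hgsum.tsum_eq.symm
    _ = ∑' z : ℕ, (pM t (z:ℤ) - pM t ((z:ℤ)+1)) * (2*(z:ℝ)+1) * boxAvg u x z :=
        tsum_congr (fun k => (hsummand k).symm)
end

section
/- (Static backtracking bound) Let 0 < α < β < 1 and ρ ∈ (0,1) satisfy the transience condition ρ ln((1-α)/α) + (1-ρ) ln((1-β)/β) < 0. Choose ρ̃ ∈ [ρ,1) with E^{ρ̃}[ln((1-ω)/ω)] < (1/2)·E^{ρ}[ln((1-ω)/ω)]. Then there is C > 0 such that for t large enough (depending on δ), for any static environment η ∈ {0,1}^ℤ with ⟨η⟩ over the box of radius t^δ/2 centered at -t^δ/2 at most ρ̃, the static random walk started at 0 satisfies S^η( inf_{0≤s≤t} X_s ≤ -t^δ ) ≤ e^{-C t^δ}. -/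
open MeasureTheory

/-- `μ` is the law of the nearest-neighbour random walk on `ℤ` started at `0`
in the static environment `w` (jump right from `i` with probability `w i`,
left with probability `1 - w i`), characterized by its cylinder probabilities. -/
def IsWalkLaw (w : ℤ → ℝ) (μ : Measure (ℕ → ℤ)) : Prop :=
  IsProbabilityMeasure μ ∧
  ∀ (n : ℕ) (y : ℕ → ℤ), y 0 = 0 →
    μ {f | ∀ k ≤ n, f k = y k} =
      ENNReal.ofReal (∏ k ∈ Finset.range n,
        (if y (k + 1) = y k + 1 then w (y k)
         else if y (k + 1) = y k - 1 then 1 - w (y k) else 0))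


noncomputable section SBB
open Classical

namespace SBB

def dirB (b : Bool) : ℤ := if b then 1 else -1

def posW (x : ℤ) (ε : ℕ → Bool) : ℕ → ℤ
  | 0 => x
  | k+1 => posW x ε k + dirB (ε k)

noncomputable def wtW (w : ℤ → ℝ) (x : ℤ) (ε : ℕ → Bool) (m : ℕ) : ℝ :=
  ∏ k ∈ Finset.range m, (if ε k then w (posW x ε k) else 1 - w (posW x ε k))

noncomputable def hitw (w : ℤ → ℝ) (L : ℤ) : ℕ → ℤ → ℝ
  | 0, x => if x ≤ -L then 1 else 0
  | m+1, x => if x ≤ -L then 1 else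
      w x * hitw w L m (x+1) + (1 - w x) * hitw w L m (x-1)

noncomputable def qw (w : ℤ → ℝ) (L : ℤ) : ℕ → ℤ → ℝ
  | 0, x => if x ≤ -L then 1 else 0
  | m+1, x => if x ≤ -L then 1 else if 0 ≤ x then 0
      else w x * qw w L m (x+1) + (1 - w x) * qw w L m (x-1)

def extB (m : ℕ) (ε : Fin m → Bool) : ℕ → Bool := fun k => if h : k < m then ε ⟨k, h⟩ else false

lemma posW_shift (x : ℤ) (ε : ℕ → Bool) (k : ℕ) :
    posW x ε (k+1) = posW (x + dirB (ε 0)) (fun j => ε (j+1)) k := by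
  induction k with
  | zero => simp [posW]
  | succ k ih =>
    rw [show posW x ε (k+1+1) = posW x ε (k+1) + dirB (ε (k+1)) from rfl, ih]
    rfl

lemma wtW_succ (w : ℤ → ℝ) (x : ℤ) (ε : ℕ → Bool) (m : ℕ) :
    wtW w x ε (m+1) =
      (if ε 0 then w x else 1 - w x) * wtW w (x + dirB (ε 0)) (fun j => ε (j+1)) m := by
  unfold wtW
  rw [Finset.prod_range_succ', mul_comm]
  congr 1
  apply Finset.prod_congr rfl
  intro k _
  rw [posW_shift]

lemma extB_cons_zero (m : ℕ) (b : Bool) (ε : Fin m → Bool) :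
    extB (m+1) (Fin.cons b ε) 0 = b := by
  simp [extB]

lemma extB_cons_succ (m : ℕ) (b : Bool) (ε : Fin m → Bool) :
    (fun j => extB (m+1) (Fin.cons b ε) (j+1)) = extB m ε := by
  funext j
  simp only [extB]
  by_cases h : j < m
  · rw [dif_pos (by omega : j+1 < m+1), dif_pos h]
    exact Fin.cons_succ (α := fun _ : Fin (m+1) => Bool) b ε ⟨j, h⟩
  · rw [dif_neg (by omega : ¬ j+1 < m+1), dif_neg h]

lemma sum_cons_split (m : ℕ) (F : (ℕ → Bool) → ℝ) :
    ∑ ε : Fin (m+1) → Bool, F (extB (m+1) ε) =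
      ∑ b : Bool, ∑ ε : Fin m → Bool, F (extB (m+1) (Fin.cons b ε)) := by
  have h1 : ∑ p : Bool × (Fin m → Bool),
      F (extB (m+1) ((Fin.consEquiv fun _ : Fin (m+1) => Bool) p))
      = ∑ ε : Fin (m+1) → Bool, F (extB (m+1) ε) :=
    Equiv.sum_comp (Fin.consEquiv fun _ : Fin (m+1) => Bool)
      (fun ε : Fin (m+1) → Bool => F (extB (m+1) ε))
  rw [← h1, Fintype.sum_prod_type]
  rfl

lemma wtW_total (w : ℤ → ℝ) :
    ∀ (m : ℕ) (x : ℤ), ∑ ε : Fin m → Bool, wtW w x (extB m ε) m = 1 := by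
  intro m
  induction m with
  | zero => intro x; simp [wtW]
  | succ m ih =>
    intro x
    rw [sum_cons_split m (fun e => wtW w x e (m+1))]
    have : ∀ b : Bool, ∀ ε : Fin m → Bool,
        wtW w x (extB (m+1) (Fin.cons b ε)) (m+1)
          = (if b then w x else 1 - w x) * wtW w (x + dirB b) (extB m ε) m := by
      intro b ε
      rw [wtW_succ, extB_cons_zero, extB_cons_succ]
    simp only [this, ← Finset.mul_sum, ih]
    rw [Fintype.sum_bool]
    simp

lemma hitw_sum (w : ℤ → ℝ) (L : ℤ) :
    ∀ (m : ℕ) (x : ℤ),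
      ∑ ε : Fin m → Bool,
        (if ∃ s ≤ m, posW x (extB m ε) s ≤ -L then wtW w x (extB m ε) m else 0)
        = hitw w L m x := by
  intro m
  induction m with
  | zero =>
    intro x
    have : ∀ ε : Fin 0 → Bool, (∃ s ≤ 0, posW x (extB 0 ε) s ≤ -L) ↔ x ≤ -L := by
      intro ε
      constructor
      · rintro ⟨s, hs, h⟩; interval_cases s; exact h
      · intro h; exact ⟨0, le_refl _, h⟩
    simp only [hitw]
    rcases le_or_gt x (-L) with h | h
    · simp [wtW, this, h, posW]
    · simp [wtW, this, not_le.2 h, posW]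
  | succ m ih =>
    intro x
    rw [sum_cons_split m (fun e =>
      if ∃ s ≤ m+1, posW x e s ≤ -L then wtW w x e (m+1) else 0)]
    have key : ∀ b : Bool, ∀ ε : Fin m → Bool,
        (if ∃ s ≤ m+1, posW x (extB (m+1) (Fin.cons b ε)) s ≤ -L
          then wtW w x (extB (m+1) (Fin.cons b ε)) (m+1) else 0)
        = (if b then w x else 1 - w x) *
          (if x ≤ -L then wtW w (x + dirB b) (extB m ε) m else
            (if ∃ s ≤ m, posW (x + dirB b) (extB m ε) s ≤ -L
              then wtW w (x + dirB b) (extB m ε) m else 0)) := by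
      intro b ε
      have hext : (fun j => extB (m+1) (Fin.cons b ε) (j+1)) = extB m ε :=
        extB_cons_succ m b ε
      have hwt : wtW w x (extB (m+1) (Fin.cons b ε)) (m+1)
          = (if b then w x else 1 - w x) * wtW w (x + dirB b) (extB m ε) m := by
        rw [wtW_succ, extB_cons_zero, hext]
      have hiff : (∃ s ≤ m+1, posW x (extB (m+1) (Fin.cons b ε)) s ≤ -L)
          ↔ (x ≤ -L ∨ ∃ s ≤ m, posW (x + dirB b) (extB m ε) s ≤ -L) := by
        constructor
        · rintro ⟨s, hs, h⟩
          match s, h with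
          | 0, h => exact Or.inl h
          | (s+1), h =>
            right
            refine ⟨s, by omega, ?_⟩
            rw [posW_shift, extB_cons_zero, hext] at h
            exact h
        · rintro (h | ⟨s, hs, h⟩)
          · exact ⟨0, by omega, h⟩
          · refine ⟨s+1, by omega, ?_⟩
            rw [posW_shift, extB_cons_zero, hext]
            exact h
      rcases le_or_gt x (-L) with hx | hx
      · rw [if_pos (hiff.2 (Or.inl hx)), if_pos hx, hwt]
      · rw [if_neg (not_le.2 hx)]
        by_cases hc : ∃ s ≤ m, posW (x + dirB b) (extB m ε) s ≤ -L
        · rw [if_pos (hiff.2 (Or.inr hc)), if_pos hc, hwt]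
        · rw [if_neg, if_neg hc, mul_zero]
          rw [hiff]
          rintro (h | h)
          · exact absurd h (not_le.2 hx)
          · exact hc h
    simp only [key]
    rcases le_or_gt x (-L) with hx | hx
    · simp only [if_pos hx, ← Finset.mul_sum, wtW_total]
      rw [Fintype.sum_bool]
      simp [hitw, hx]
    · simp only [if_neg (not_le.2 hx), ← Finset.mul_sum, ih]
      rw [Fintype.sum_bool]
      simp [hitw, not_le.2 hx, dirB, sub_eq_add_neg]

variable {w : ℤ → ℝ} {L : ℤ}

lemma qw_nonneg (hw0 : ∀ i, 0 < w i) (hw1 : ∀ i, w i < 1) :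
    ∀ m x, 0 ≤ qw w L m x := by
  intro m
  induction m with
  | zero => intro x; unfold qw; positivity
  | succ m ih =>
    intro x
    unfold qw
    split
    · norm_num
    split
    · norm_num
    have h1 := ih (x+1); have h2 := ih (x-1)
    have := (hw0 x).le; have := (hw1 x).le
    nlinarith

lemma qw_one (hx : x ≤ -L) : ∀ m, qw w L m x = 1 := by
  intro m; cases m <;> simp [qw, hx]

lemma hitw_one (hx : x ≤ -L) : ∀ m, hitw w L m x = 1 := by
  intro m; cases m <;> simp [hitw, hx]

lemma qw_zero (hL : 1 ≤ L) (hx : 0 ≤ x) : ∀ m, qw w L m x = 0 := by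
  intro m
  have : ¬ x ≤ -L := by omega
  cases m <;> simp [qw, this, hx]

lemma qw_mono (hw0 : ∀ i, 0 < w i) (hw1 : ∀ i, w i < 1) :
    ∀ m x, qw w L m x ≤ qw w L (m+1) x := by
  intro m
  induction m with
  | zero =>
    intro x
    rw [show qw w L 0 x = if x ≤ -L then 1 else 0 from rfl]
    split_ifs with h1
    · exact le_of_eq (qw_one h1 1).symm
    · exact qw_nonneg hw0 hw1 1 x
  | succ m ih =>
    intro x
    rw [show qw w L (m+1) x = if x ≤ -L then 1 else if 0 ≤ x then 0
      else w x * qw w L m (x+1) + (1 - w x) * qw w L m (x-1) from rfl,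
      show qw w L (m+2) x = if x ≤ -L then 1 else if 0 ≤ x then 0
      else w x * qw w L (m+1) (x+1) + (1 - w x) * qw w L (m+1) (x-1) from rfl]
    split_ifs with ha hb
    · exact le_rfl
    · exact le_rfl
    have h1 := ih (x+1); have h2 := ih (x-1)
    have hwx := (hw0 x).le
    have hwx1 : 0 ≤ 1 - w x := by linarith [(hw1 x).le]
    gcongr


lemma qw_mono_le (hw0 : ∀ i, 0 < w i) (hw1 : ∀ i, w i < 1) {m n : ℕ} (h : m ≤ n) (x : ℤ) :
    qw w L m x ≤ qw w L n x := by
  induction n with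
  | zero => simp_all
  | succ n ih =>
    rcases Nat.lt_or_ge m (n+1) with h' | h'
    · exact le_trans (ih (by omega)) (qw_mono hw0 hw1 n x)
    · have : m = n+1 := by omega
      subst this; exact le_rfl

def aW (w : ℤ → ℝ) (L i : ℤ) : ℝ := ∏ j ∈ Finset.Icc (-L+1) i, (1 - w j)/w j

def SW (w : ℤ → ℝ) (L x : ℤ) : ℝ := ∑ i ∈ Finset.Icc x (-1), aW w L i

def phiW (w : ℤ → ℝ) (L x : ℤ) : ℝ := SW w L (max x (-L)) / SW w L (-L)

lemma aW_pos (hw0 : ∀ i, 0 < w i) (hw1 : ∀ i, w i < 1) (i : ℤ) : 0 < aW w L i := by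
  apply Finset.prod_pos
  intro j _
  have := hw0 j; have := hw1 j
  apply div_pos <;> linarith

lemma SW_nonneg (hw0 : ∀ i, 0 < w i) (hw1 : ∀ i, w i < 1) (x : ℤ) : 0 ≤ SW w L x :=
  Finset.sum_nonneg fun i _ => (aW_pos hw0 hw1 i).le

lemma aW_neg_L : aW w L (-L) = 1 := by
  unfold aW
  rw [Finset.Icc_eq_empty (by omega), Finset.prod_empty]

lemma SW_one_le (hw0 : ∀ i, 0 < w i) (hw1 : ∀ i, w i < 1) (hL : 1 ≤ L) :
    1 ≤ SW w L (-L) := by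
  have h1 : (-L) ∈ Finset.Icc (-L) (-1 : ℤ) := by simp; omega
  have := Finset.single_le_sum (f := fun i => aW w L i)
    (fun i _ => (aW_pos (L := L) hw0 hw1 i).le) h1
  exact le_trans (le_of_eq aW_neg_L.symm) this

lemma SW_step (x : ℤ) (hx : x ≤ -1) : SW w L x = aW w L x + SW w L (x+1) := by
  unfold SW
  have : Finset.Icc x (-1 : ℤ) = insert x (Finset.Icc (x+1) (-1)) := by
    ext j; simp [Finset.mem_Icc]; omega
  rw [this, Finset.sum_insert (by simp [Finset.mem_Icc] <;> omega)]

lemma aW_step (hw0 : ∀ i, 0 < w i) (x : ℤ) (hx : -L + 1 ≤ x) :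
    aW w L x = aW w L (x-1) * ((1 - w x)/w x) := by
  unfold aW
  have : Finset.Icc (-L+1) x = insert x (Finset.Icc (-L+1) (x-1)) := by
    ext j; simp [Finset.mem_Icc]; omega
  rw [this, Finset.prod_insert (by simp [Finset.mem_Icc] <;> omega), mul_comm]

lemma SW_harmonic (hw0 : ∀ i, 0 < w i) (hw1 : ∀ i, w i < 1) (x : ℤ)
    (hx1 : -L < x) (hx2 : x < 0) :
    SW w L x = w x * SW w L (x+1) + (1 - w x) * SW w L (x-1) := by
  have h1 : SW w L x = aW w L x + SW w L (x+1) := SW_step x (by omega)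
  have h2 : SW w L (x-1) = aW w L (x-1) + SW w L x := by
    have := SW_step (w := w) (L := L) (x-1) (by omega)
    rw [this]; ring_nf
  have h3 : aW w L x = aW w L (x-1) * ((1 - w x)/w x) := aW_step hw0 x (by omega)
  have hwx : w x ≠ 0 := (hw0 x).ne'
  have key : w x * aW w L x = (1 - w x) * aW w L (x-1) := by
    rw [h3]; field_simp
  have e1 : w x * SW w L (x+1) = w x * SW w L x - w x * aW w L x := by
    rw [h1]; ring
  have e2 : (1 - w x) * SW w L (x-1)
      = (1 - w x) * aW w L (x-1) + (1 - w x) * SW w L x := by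
    rw [h2]; ring
  linarith [key, e1, e2]

lemma phiW_one (hw0 : ∀ i, 0 < w i) (hw1 : ∀ i, w i < 1) (hL : 1 ≤ L)
    (hx : x ≤ -L) : phiW w L x = 1 := by
  unfold phiW
  rw [max_eq_right (by omega)]
  exact div_self (lt_of_lt_of_le one_pos (SW_one_le hw0 hw1 hL)).ne'

lemma phiW_nonneg (hw0 : ∀ i, 0 < w i) (hw1 : ∀ i, w i < 1) (x : ℤ) : 0 ≤ phiW w L x := by
  unfold phiW
  exact div_nonneg (SW_nonneg hw0 hw1 _) (SW_nonneg hw0 hw1 _)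

lemma phiW_harmonic (hw0 : ∀ i, 0 < w i) (hw1 : ∀ i, w i < 1) (hL : 1 ≤ L) (x : ℤ)
    (hx1 : -L < x) (hx2 : x < 0) :
    phiW w L x = w x * phiW w L (x+1) + (1 - w x) * phiW w L (x-1) := by
  unfold phiW
  rw [max_eq_left (by omega), max_eq_left (by omega), max_eq_left (by omega)]
  rw [SW_harmonic hw0 hw1 x hx1 hx2]
  ring

lemma qw_le_phiW (hw0 : ∀ i, 0 < w i) (hw1 : ∀ i, w i < 1) (hL : 1 ≤ L) :
    ∀ m x, qw w L m x ≤ phiW w L x := by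
  intro m
  induction m with
  | zero =>
    intro x
    rw [show qw w L 0 x = if x ≤ -L then 1 else 0 from rfl]
    split_ifs with h
    · exact le_of_eq (phiW_one hw0 hw1 hL h).symm
    · exact phiW_nonneg hw0 hw1 x
  | succ m ih =>
    intro x
    rw [show qw w L (m+1) x = if x ≤ -L then 1 else if 0 ≤ x then 0
      else w x * qw w L m (x+1) + (1 - w x) * qw w L m (x-1) from rfl]
    split_ifs with h1 h2
    · exact le_of_eq (phiW_one hw0 hw1 hL h1).symm
    · exact phiW_nonneg hw0 hw1 x
    · rw [phiW_harmonic hw0 hw1 hL x (by omega) (by omega)]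
      have hwx := (hw0 x).le
      have hwx1 : 0 ≤ 1 - w x := by linarith [(hw1 x).le]
      gcongr
      · exact ih (x+1)
      · exact ih (x-1)

lemma phiW_neg_one_le (hw0 : ∀ i, 0 < w i) (hw1 : ∀ i, w i < 1) (hL : 1 ≤ L) :
    phiW w L (-1) ≤ aW w L (-1) := by
  unfold phiW
  rw [max_eq_left (by omega)]
  have hS : SW w L (-1) = aW w L (-1) := by
    unfold SW
    rw [Finset.Icc_self, Finset.sum_singleton]
  rw [hS]
  rw [div_le_iff₀ (lt_of_lt_of_le one_pos (SW_one_le hw0 hw1 hL))]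
  nlinarith [aW_pos (w := w) (L := L) hw0 hw1 (-1), SW_one_le (w := w) (L := L) hw0 hw1 hL]

lemma hitw_le_main (hw0 : ∀ i, 0 < w i) (hw1 : ∀ i, w i < 1) (hL : 2 ≤ L) (t : ℕ) :
    hitw w L t 0 ≤ t * qw w L t (-1) := by
  set q := qw w L t (-1) with hq
  have hq0 : 0 ≤ q := qw_nonneg hw0 hw1 t (-1)
  suffices H : ∀ m, m ≤ t → ∀ x : ℤ,
      (0 ≤ x → hitw w L m x ≤ m * q) ∧
      (-L < x → x < 0 → hitw w L m x ≤ qw w L m x + m * q) by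
    simpa using (H t le_rfl 0).1 le_rfl
  intro m
  induction m with
  | zero =>
    intro _ x
    constructor
    · intro hx
      rw [show hitw w L 0 x = if x ≤ -L then 1 else 0 from rfl, if_neg (by omega)]
      simp
    · intro hx1 hx2
      rw [show hitw w L 0 x = if x ≤ -L then 1 else 0 from rfl, if_neg (by omega),
        show qw w L 0 x = if x ≤ -L then 1 else 0 from rfl, if_neg (by omega)]
      simp
  | succ m ih =>
    intro hm x
    have ihm := ih (by omega)
    have hwx0 := (hw0 x).le
    have hwx1 : 0 ≤ 1 - w x := by linarith [(hw1 x).le]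
    constructor
    · intro hx
      rw [show hitw w L (m+1) x = if x ≤ -L then 1 else
        w x * hitw w L m (x+1) + (1 - w x) * hitw w L m (x-1) from rfl,
        if_neg (by omega)]
      have hplus : hitw w L m (x+1) ≤ m * q := (ihm (x+1)).1 (by omega)
      rcases eq_or_lt_of_le hx with hx0 | hx0
      · -- x = 0
        have hminus : hitw w L m (x-1) ≤ qw w L m (x-1) + m * q :=
          (ihm (x-1)).2 (by omega) (by omega)
        have hqm : qw w L m (x-1) ≤ q := by
          rw [hq, show x - 1 = -1 by omega]
          exact qw_mono_le hw0 hw1 (by omega) (-1)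
        have : hitw w L m (x-1) ≤ (m+1 : ℕ) * q := by
          push_cast
          calc hitw w L m (x-1) ≤ qw w L m (x-1) + m * q := hminus
          _ ≤ q + m * q := by linarith
          _ = (m + 1) * q := by ring
        calc w x * hitw w L m (x+1) + (1 - w x) * hitw w L m (x-1)
            ≤ w x * ((m+1 : ℕ) * q) + (1 - w x) * ((m+1 : ℕ) * q) := by
              apply add_le_add
              · apply mul_le_mul_of_nonneg_left _ hwx0
                calc hitw w L m (x+1) ≤ m * q := hplus
                _ ≤ (m+1 : ℕ) * q := by push_cast; nlinarith
              · exact mul_le_mul_of_nonneg_left this hwx1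
          _ = (m+1 : ℕ) * q := by ring
      · -- x ≥ 1
        have hminus : hitw w L m (x-1) ≤ m * q := (ihm (x-1)).1 (by omega)
        calc w x * hitw w L m (x+1) + (1 - w x) * hitw w L m (x-1)
            ≤ w x * (m * q) + (1 - w x) * (m * q) := by
              apply add_le_add
              · exact mul_le_mul_of_nonneg_left hplus hwx0
              · exact mul_le_mul_of_nonneg_left hminus hwx1
          _ = m * q := by ring
          _ ≤ (m+1 : ℕ) * q := by push_cast; nlinarith
    · intro hx1 hx2
      rw [show hitw w L (m+1) x = if x ≤ -L then 1 else
        w x * hitw w L m (x+1) + (1 - w x) * hitw w L m (x-1) from rfl,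
        if_neg (by omega),
        show qw w L (m+1) x = if x ≤ -L then 1 else if 0 ≤ x then 0
        else w x * qw w L m (x+1) + (1 - w x) * qw w L m (x-1) from rfl,
        if_neg (by omega), if_neg (by omega)]
      have hplus : hitw w L m (x+1) ≤ qw w L m (x+1) + m * q := by
        rcases lt_or_ge (x+1) 0 with h | h
        · exact (ihm (x+1)).2 (by omega) h
        · have hx10 : x + 1 = 0 := by omega
          rw [hx10, qw_zero (by omega) le_rfl]
          simpa using (ihm 0).1 le_rfl
      have hminus : hitw w L m (x-1) ≤ qw w L m (x-1) + m * q := by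
        rcases lt_or_ge (-L) (x-1) with h | h
        · exact (ihm (x-1)).2 h (by omega)
        · rw [hitw_one (by omega), qw_one (by omega)]
          nlinarith
      calc w x * hitw w L m (x+1) + (1 - w x) * hitw w L m (x-1)
          ≤ w x * (qw w L m (x+1) + m * q) + (1 - w x) * (qw w L m (x-1) + m * q) := by
            apply add_le_add
            · exact mul_le_mul_of_nonneg_left hplus hwx0
            · exact mul_le_mul_of_nonneg_left hminus hwx1
        _ = (w x * qw w L m (x+1) + (1 - w x) * qw w L m (x-1)) + m * q := by ring
        _ ≤ _ := by push_cast; nlinarith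

lemma wtW_nonneg (w : ℤ → ℝ) (hw0 : ∀ i, 0 ≤ w i) (hw1 : ∀ i, w i ≤ 1)
    (x : ℤ) (ε : ℕ → Bool) (m : ℕ) : 0 ≤ wtW w x ε m := by
  apply Finset.prod_nonneg
  intro k _
  split
  · exact hw0 _
  · linarith [hw1 (posW x ε k)]

/-- The walk-law measure of the event of going below `-r` within `t` steps is
bounded by the hitting recursion value. -/
lemma measure_hit_le (w : ℤ → ℝ) (hw0 : ∀ i, 0 < w i) (hw1 : ∀ i, w i < 1)
    (μ : Measure (ℕ → ℤ)) (hμ : IsWalkLaw w μ) (t : ℕ) (r : ℝ) (hr : 0 < r) :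
    μ {f | ∃ s : ℕ, s ≤ t ∧ ((f s : ℝ) ≤ -r)} ≤ ENNReal.ofReal (hitw w ⌈r⌉ t 0) := by
  obtain ⟨hprob, hcyl⟩ := hμ
  set L : ℤ := ⌈r⌉ with hLdef
  -- the set where f 0 = 0 has full measure
  have hs0 : μ {f : ℕ → ℤ | f 0 = 0} = 1 := by
    have := hcyl 0 (fun _ => 0) rfl
    simp only [Finset.range_zero, Finset.prod_empty, ENNReal.ofReal_one] at this
    rw [← this]
    congr 1
    ext f
    simp
  have hmeas0 : MeasurableSet {f : ℕ → ℤ | f 0 = 0} := by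
    have : {f : ℕ → ℤ | f 0 = 0} = (fun f : ℕ → ℤ => f 0) ⁻¹' {0} := by
      ext f; simp
    rw [this]
    exact (measurable_pi_apply 0) (measurableSet_singleton 0)
  have hs0c : μ {f : ℕ → ℤ | f 0 = 0}ᶜ = 0 := by
    rw [measure_compl hmeas0 (measure_ne_top μ _), hs0, measure_univ, tsub_self]
  -- path extension of g : Fin t → ℤ
  set yg : (Fin t → ℤ) → ℕ → ℤ := fun g k => if h : 1 ≤ k ∧ k ≤ t then g ⟨k-1, by omega⟩ else 0
    with hyg
  set cond : (Fin t → ℤ) → Prop := fun g => ∃ s : ℕ, s ≤ t ∧ ((yg g s : ℝ) ≤ -r) with hcond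
  set Tg : (Fin t → ℤ) → Set (ℕ → ℤ) := fun g =>
    if cond g then {f | ∀ k ≤ t, f k = yg g k} else ∅ with hTg
  -- cover
  have hcover : {f : ℕ → ℤ | ∃ s : ℕ, s ≤ t ∧ ((f s : ℝ) ≤ -r)} ⊆
      (⋃ g : Fin t → ℤ, Tg g) ∪ {f : ℕ → ℤ | f 0 = 0}ᶜ := by
    intro f hf
    by_cases h0 : f 0 = 0
    · left
      refine Set.mem_iUnion.2 ⟨fun i => f (i+1), ?_⟩
      have hyf : ∀ k ≤ t, f k = yg (fun i : Fin t => f (i+1)) k := by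
        intro k hk
        rcases Nat.eq_zero_or_pos k with rfl | hk1
        · simp [hyg, h0]
        · simp only [hyg]
          rw [dif_pos ⟨hk1, hk⟩]
          congr 1
          omega
      obtain ⟨s, hs, hfs⟩ := hf
      have hc : cond (fun i : Fin t => f (i+1)) := ⟨s, hs, by rw [← hyf s hs]; exact hfs⟩
      simp only [hTg, if_pos hc]
      exact fun k hk => hyf k hk
    · right; exact h0
  have hstep1 : μ {f : ℕ → ℤ | ∃ s : ℕ, s ≤ t ∧ ((f s : ℝ) ≤ -r)} ≤ ∑' g : Fin t → ℤ, μ (Tg g) := by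
    calc μ {f : ℕ → ℤ | ∃ s : ℕ, s ≤ t ∧ ((f s : ℝ) ≤ -r)}
        ≤ μ ((⋃ g : Fin t → ℤ, Tg g) ∪ {f : ℕ → ℤ | f 0 = 0}ᶜ) := measure_mono hcover
      _ ≤ μ (⋃ g : Fin t → ℤ, Tg g) + μ ({f : ℕ → ℤ | f 0 = 0}ᶜ) := measure_union_le _ _
      _ = μ (⋃ g : Fin t → ℤ, Tg g) := by rw [hs0c, add_zero]
      _ ≤ ∑' g : Fin t → ℤ, μ (Tg g) := measure_iUnion_le _
  -- value of μ on the cylinder pieces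
  have hWg : ∀ g, μ (Tg g) = if cond g then ENNReal.ofReal (∏ k ∈ Finset.range t,
      (if yg g (k+1) = yg g k + 1 then w (yg g k)
       else if yg g (k+1) = yg g k - 1 then 1 - w (yg g k) else 0)) else 0 := by
    intro g
    by_cases hc : cond g
    · simp only [hTg, if_pos hc]
      exact hcyl t (yg g) (by simp [hyg])
    · simp [hTg, if_neg hc]
  -- the nearest-neighbour parametrization
  set gOf : (Fin t → Bool) → (Fin t → ℤ) := fun ε i => posW 0 (extB t ε) ((i : ℕ)+1) with hgOf
  have hpos : ∀ (ε : Fin t → Bool) (k : ℕ), k ≤ t → yg (gOf ε) k = posW 0 (extB t ε) k := by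
    intro ε k hk
    rcases Nat.eq_zero_or_pos k with rfl | hk1
    · simp [hyg, posW]
    · simp only [hyg]
      rw [dif_pos ⟨hk1, hk⟩]
      show posW 0 (extB t ε) ((k-1)+1) = posW 0 (extB t ε) k
      congr 1
      omega
  -- terms outside the nn-image vanish
  have hGnn : ∀ g ∉ Finset.image gOf Finset.univ, μ (Tg g) = 0 := by
    intro g hg
    rw [hWg g]
    by_cases hc : cond g
    swap
    · rw [if_neg hc]
    rw [if_pos hc]
    by_cases hnn : ∀ k, k < t → (yg g (k+1) = yg g k + 1 ∨ yg g (k+1) = yg g k - 1)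
    · exfalso
      apply hg
      set ε : Fin t → Bool := fun i => decide (yg g ((i : ℕ)+1) = yg g (i : ℕ) + 1) with hε
      have hpos2 : ∀ k, k ≤ t → posW 0 (extB t ε) k = yg g k := by
        intro k
        induction k with
        | zero => intro _; simp [hyg, posW]
        | succ k ih =>
          intro hk
          have hkt : k < t := by omega
          have ihk := ih (by omega)
          show posW 0 (extB t ε) k + dirB (extB t ε k) = yg g (k+1)
          have hev : extB t ε k = decide (yg g (k+1) = yg g k + 1) := by
            simp only [extB, dif_pos hkt, hε]
          rcases hnn k hkt with h | h
          · rw [hev, decide_eq_true h]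
            simp only [dirB, if_pos rfl]
            rw [ihk, h]
            norm_num
          · have hne : ¬ (yg g (k+1) = yg g k + 1) := by omega
            rw [hev, decide_eq_false hne]
            simp only [dirB, Bool.false_eq_true, if_neg]
            rw [ihk, h]
            norm_num
            try omega
      refine Finset.mem_image.2 ⟨ε, Finset.mem_univ _, ?_⟩
      funext i
      show posW 0 (extB t ε) ((i : ℕ)+1) = g i
      rw [hpos2 ((i : ℕ)+1) (by omega)]
      simp only [hyg]
      rw [dif_pos ⟨by omega, by omega⟩]
      exact congrArg g (Fin.ext (by simp))
    · push_neg at hnn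
      obtain ⟨k, hk, hb1, hb2⟩ := hnn
      have : (∏ k ∈ Finset.range t,
          (if yg g (k+1) = yg g k + 1 then w (yg g k)
           else if yg g (k+1) = yg g k - 1 then 1 - w (yg g k) else 0)) = 0 :=
        Finset.prod_eq_zero (Finset.mem_range.2 hk) (by rw [if_neg hb1, if_neg hb2])
      rw [this, ENNReal.ofReal_zero]
  have hinj : ∀ x ∈ Finset.univ, ∀ y ∈ Finset.univ, gOf x = gOf y → x = y := by
    intro ε _ ε' _ h
    funext i
    have h1 : posW 0 (extB t ε) ((i : ℕ)+1) = posW 0 (extB t ε') ((i : ℕ)+1) := congrFun h i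
    have h0 : ∀ k, k ≤ (i : ℕ) → posW 0 (extB t ε) k = posW 0 (extB t ε') k := by
      intro k hk
      rcases Nat.eq_zero_or_pos k with rfl | hk1
      · rfl
      · have : k - 1 < t := by omega
        have := congrFun h ⟨k-1, this⟩
        simp only [hgOf] at this
        have hkk : (k-1)+1 = k := by omega
        rwa [hkk] at this
    have h2 : posW 0 (extB t ε) (i : ℕ) = posW 0 (extB t ε') (i : ℕ) := h0 _ le_rfl
    have h3 : dirB (extB t ε (i : ℕ)) = dirB (extB t ε' (i : ℕ)) := by
      have e1 : posW 0 (extB t ε) ((i:ℕ)+1) = posW 0 (extB t ε) (i:ℕ) + dirB (extB t ε (i:ℕ)) := rfl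
      have e2 : posW 0 (extB t ε') ((i:ℕ)+1) = posW 0 (extB t ε') (i:ℕ) + dirB (extB t ε' (i:ℕ)) := rfl
      omega
    have h4 : extB t ε (i : ℕ) = extB t ε' (i : ℕ) := by
      rcases Bool.dichotomy (extB t ε (i:ℕ)) with hb | hb <;>
        rcases Bool.dichotomy (extB t ε' (i:ℕ)) with hb' | hb' <;>
          simp [hb, hb', dirB] at h3 ⊢ <;> omega
    have h5 : extB t ε (i : ℕ) = ε i := by
      simp only [extB, dif_pos i.isLt]
    have h6 : extB t ε' (i : ℕ) = ε' i := by
      simp only [extB, dif_pos i.isLt]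
    rw [← h5, ← h6, h4]
  have hterm : ∀ ε : Fin t → Bool, μ (Tg (gOf ε)) =
      ENNReal.ofReal (if ∃ s ≤ t, posW 0 (extB t ε) s ≤ -L
        then wtW w 0 (extB t ε) t else 0) := by
    intro ε
    have hcondiff : cond (gOf ε) ↔ (∃ s ≤ t, posW 0 (extB t ε) s ≤ -L) := by
      constructor
      · rintro ⟨s, hs, hle⟩
        refine ⟨s, hs, ?_⟩
        rw [hpos ε s hs] at hle
        have h2 : (⌈r⌉ : ℤ) ≤ -(posW 0 (extB t ε) s) := Int.ceil_le.2 (by push_cast; linarith)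
        rw [hLdef]
        omega
      · rintro ⟨s, hs, hle⟩
        refine ⟨s, hs, ?_⟩
        rw [hpos ε s hs]
        have h1 : r ≤ (L : ℝ) := by rw [hLdef]; exact_mod_cast Int.le_ceil r
        have h2 : ((posW 0 (extB t ε) s : ℤ) : ℝ) ≤ -(L : ℝ) := by exact_mod_cast hle
        linarith
    have hWeq : (∏ k ∈ Finset.range t,
        (if yg (gOf ε) (k+1) = yg (gOf ε) k + 1 then w (yg (gOf ε) k)
         else if yg (gOf ε) (k+1) = yg (gOf ε) k - 1 then 1 - w (yg (gOf ε) k) else 0))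
        = wtW w 0 (extB t ε) t := by
      unfold wtW
      apply Finset.prod_congr rfl
      intro k hkr
      have hk : k < t := Finset.mem_range.1 hkr
      rw [hpos ε k (by omega), hpos ε (k+1) (by omega)]
      have hstep : posW 0 (extB t ε) (k+1) = posW 0 (extB t ε) k + dirB (extB t ε k) := rfl
      rcases Bool.dichotomy (extB t ε k) with hb | hb
      · have : posW 0 (extB t ε) (k+1) = posW 0 (extB t ε) k - 1 := by
          rw [hstep, hb]; simp [dirB, sub_eq_add_neg]
        rw [if_neg (by omega), if_pos this, hb]
        simp
      · have : posW 0 (extB t ε) (k+1) = posW 0 (extB t ε) k + 1 := by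
          rw [hstep, hb]; simp [dirB]
        rw [if_pos this, hb]
        simp
    rw [hWg]
    by_cases hc : cond (gOf ε)
    · rw [if_pos hc, if_pos (hcondiff.1 hc), hWeq]
    · rw [if_neg hc, if_neg (fun hh => hc (hcondiff.2 hh)), ENNReal.ofReal_zero]
  calc μ {f : ℕ → ℤ | ∃ s : ℕ, s ≤ t ∧ ((f s : ℝ) ≤ -r)}
      ≤ ∑' g : Fin t → ℤ, μ (Tg g) := hstep1
    _ = ∑ g ∈ Finset.image gOf Finset.univ, μ (Tg g) := tsum_eq_sum hGnn
    _ = ∑ ε : Fin t → Bool, μ (Tg (gOf ε)) := Finset.sum_image hinj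
    _ = ∑ ε : Fin t → Bool, ENNReal.ofReal (if ∃ s ≤ t, posW 0 (extB t ε) s ≤ -L
          then wtW w 0 (extB t ε) t else 0) := by
        exact Finset.sum_congr rfl (fun ε _ => hterm ε)
    _ = ENNReal.ofReal (∑ ε : Fin t → Bool, (if ∃ s ≤ t, posW 0 (extB t ε) s ≤ -L
          then wtW w 0 (extB t ε) t else 0)) := by
        rw [ENNReal.ofReal_sum_of_nonneg]
        intro ε _
        split
        · exact wtW_nonneg w (fun i => (hw0 i).le) (fun i => (hw1 i).le) _ _ _
        · exact le_rfl
    _ = ENNReal.ofReal (hitw w L t 0) := by rw [hitw_sum w L t 0]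

/-- Environment estimate: the product of odds over `[-L+1,-1]` is bounded using
the empirical density of the environment over the bigger box. -/
lemma aW_env_bound (α β ρt A B : ℝ) (η : ℤ → Bool) (L : ℤ) (L' : ℕ)
    (hα : 0 < α) (hα1 : α < 1) (hβ0 : 0 < β) (hβ : β < 1)
    (hA : A = Real.log ((1 - α)/α)) (hB : B = Real.log ((1 - β)/β))
    (hL1 : 1 ≤ L) (hLL' : L ≤ 2 * (L' : ℤ) + 1)
    (hρt : 0 ≤ ρt) (hBA : B ≤ A)
    (hN : ∑ y ∈ Finset.Icc (-(L' : ℤ) - L') (-(L' : ℤ) + L'),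
        (if η y then (1:ℝ) else 0) ≤ ρt * (2 * (L' : ℝ) + 1)) :
    aW (fun i => if η i then α else β) L (-1)
      ≤ Real.exp (B * ((L : ℝ) - 1) + (A - B) * (ρt * (2 * (L' : ℝ) + 1))) := by
  set w : ℤ → ℝ := fun i => if η i then α else β with hw
  set J : Finset ℤ := Finset.Icc (-L+1) (-1) with hJ
  have hfac : ∀ j : ℤ, (1 - w j)/w j = Real.exp (if η j then A else B) := by
    intro j
    by_cases h : η j
    · simp only [hw, h, if_true, hA]
      exact (Real.exp_log (div_pos (by linarith) hα)).symm
    · simp only [hw, h, Bool.false_eq_true, if_false, hB]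
      exact (Real.exp_log (div_pos (by linarith) hβ0)).symm
  have h1 : aW w L (-1) = Real.exp (∑ j ∈ J, (if η j then A else B)) := by
    unfold aW
    rw [Real.exp_sum]
    exact Finset.prod_congr rfl (fun j _ => hfac j)
  rw [h1]
  apply Real.exp_le_exp.2
  -- split the sum
  have hsplit : ∑ j ∈ J, (if η j then A else B)
      = B * (J.card : ℝ) + (A - B) * ∑ j ∈ J, (if η j then (1:ℝ) else 0) := by
    have : ∀ j : ℤ, (if η j then A else B) = B + (A - B) * (if η j then (1:ℝ) else 0) := by
      intro j; by_cases h : η j <;> simp [h] <;> ring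
    rw [Finset.sum_congr rfl (fun j _ => this j), Finset.sum_add_distrib,
      Finset.sum_const, ← Finset.mul_sum, nsmul_eq_mul, mul_comm (J.card : ℝ) B]
  rw [hsplit]
  have hcard : (J.card : ℝ) = (L : ℝ) - 1 := by
    have h0 : J.card = (L - 1).toNat := by
      rw [hJ, Int.card_Icc]
      congr 1
      ring
    have h1 : (((L-1).toNat : ℕ) : ℤ) = L - 1 := Int.toNat_of_nonneg (by omega)
    rw [h0]
    exact_mod_cast congrArg (Int.cast : ℤ → ℝ) h1
  rw [hcard]
  have hsub : J ⊆ Finset.Icc (-(L' : ℤ) - L') (-(L' : ℤ) + L') := by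
    intro j hj
    rw [hJ, Finset.mem_Icc] at hj
    rw [Finset.mem_Icc]
    omega
  have hNle : ∑ j ∈ J, (if η j then (1:ℝ) else 0) ≤ ρt * (2 * (L' : ℝ) + 1) := by
    calc ∑ j ∈ J, (if η j then (1:ℝ) else 0)
        ≤ ∑ y ∈ Finset.Icc (-(L' : ℤ) - L') (-(L' : ℤ) + L'), (if η y then (1:ℝ) else 0) := by
          apply Finset.sum_le_sum_of_subset_of_nonneg hsub
          intro i _ _
          split <;> norm_num
      _ ≤ ρt * (2 * (L' : ℝ) + 1) := hN
  have h := mul_le_mul_of_nonneg_left hNle (by linarith : 0 ≤ A - B)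
  linarith

end SBB

end SBB

open SBB in
/-- static backtracking bound.  Under the transience condition and
with `ρ̃` as specified, there is `C > 0` such that for `t` large enough, for any
static environment `η` whose empirical density on the box of radius `t^δ/2`
centered at `-t^δ/2` is at most `ρ̃`, the static walk satisfies
`S^η(inf_{0≤s≤t} X_s ≤ -t^δ) ≤ e^{-C t^δ}`. -/
theorem static_backtracking_bound (α β ρ ρt : ℝ)
    (hα : 0 < α) (hαβ : α < β) (hβ : β < 1) (hρ0 : 0 < ρ) (hρ1 : ρ < 1)
    (htrans : ρ * Real.log ((1 - α) / α) + (1 - ρ) * Real.log ((1 - β) / β) < 0)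
    (hρt0 : ρ ≤ ρt) (hρt1 : ρt < 1)
    (hhalf : ρt * Real.log ((1 - α) / α) + (1 - ρt) * Real.log ((1 - β) / β)
      < (1 / 2) * (ρ * Real.log ((1 - α) / α) + (1 - ρ) * Real.log ((1 - β) / β)))
    (δ : ℝ) (hδ : 0 < δ) :
    ∃ C : ℝ, 0 < C ∧ ∃ T : ℕ, ∀ t : ℕ, T ≤ t →
      ∀ η : ℤ → Bool,
        boxAvg (fun y => if η y then (1 : ℝ) else 0)
            (-(⌈(t : ℝ) ^ δ / 2⌉₊ : ℤ)) ⌈(t : ℝ) ^ δ / 2⌉₊ ≤ ρt →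
        ∀ μ : Measure (ℕ → ℤ), IsWalkLaw (fun i => if η i then α else β) μ →
          μ {f | ∃ s : ℕ, s ≤ t ∧ ((f s : ℝ) ≤ -(t : ℝ) ^ δ)}
            ≤ ENNReal.ofReal (Real.exp (-C * (t : ℝ) ^ δ)) := by
  classical
  set A := Real.log ((1 - α) / α) with hA
  set B := Real.log ((1 - β) / β) with hB
  have hα1 : α < 1 := lt_trans hαβ hβ
  have hβ0 : 0 < β := lt_trans hα hαβ
  have hBA : B < A := by
    apply Real.log_lt_log (div_pos (by linarith) hβ0)
    rw [div_lt_div_iff₀ hβ0 hα]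
    nlinarith
  have hB0 : B < 0 := by nlinarith
  set Et := ρt * A + (1 - ρt) * B with hEt
  have hEtneg : Et < 0 := by nlinarith
  set C := -Et / 2 with hC
  have hCpos : 0 < C := by rw [hC]; linarith
  set K := -B + 3 * (ρt * (A - B)) with hK
  have hρtpos : 0 < ρt := lt_of_lt_of_le hρ0 hρt0
  -- choice of the threshold T
  have hev : ∀ᶠ x : ℝ in Filter.atTop, Real.log x + K ≤ C * x ^ δ ∧ (2:ℝ) ≤ x ^ δ := by
    have h2 := (isLittleO_log_rpow_atTop hδ).bound (show (0:ℝ) < C/2 by linarith)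
    have h1 := (tendsto_rpow_atTop hδ).eventually_ge_atTop (max 2 (K / (C/2)))
    have h0 := Filter.eventually_ge_atTop (1:ℝ)
    filter_upwards [h2, h1, h0] with x hx2 hx1 hx0
    have hxd : (0:ℝ) ≤ x ^ δ := Real.rpow_nonneg (by linarith) δ
    constructor
    · have hlog : Real.log x ≤ C/2 * x ^ δ := by
        rw [Real.norm_eq_abs, Real.norm_eq_abs, abs_of_nonneg hxd] at hx2
        exact le_trans (le_abs_self _) hx2
      have hK2 : K ≤ C/2 * x ^ δ := by
        have hxK : K / (C/2) ≤ x ^ δ := le_trans (le_max_right _ _) hx1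
        rw [div_le_iff₀ (by linarith : (0:ℝ) < C/2)] at hxK
        linarith
      linarith
    · exact le_trans (le_max_left _ _) hx1
  have hevN : ∀ᶠ n : ℕ in Filter.atTop,
      Real.log n + K ≤ C * (n:ℝ) ^ δ ∧ (2:ℝ) ≤ (n:ℝ) ^ δ :=
    (tendsto_natCast_atTop_atTop (R := ℝ)).eventually hev
  obtain ⟨T, hT⟩ := Filter.eventually_atTop.1 hevN
  refine ⟨C, hCpos, T, ?_⟩
  intro t ht η hbox μ hμ
  obtain ⟨hlogK, h2t⟩ := hT t ht
  set w : ℤ → ℝ := fun i => if η i then α else β with hw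
  have hw0 : ∀ i, 0 < w i := by
    intro i; simp only [hw]; split
    · exact hα
    · exact hβ0
  have hw1 : ∀ i, w i < 1 := by
    intro i; simp only [hw]; split
    · exact hα1
    · exact hβ
  set r := (t:ℝ) ^ δ with hr
  have hr0 : 0 < r := by rw [hr]; linarith
  set L : ℤ := ⌈r⌉ with hL
  have hrL : r ≤ (L : ℝ) := Int.le_ceil r
  have hL2 : 2 ≤ L := by
    have : ((2:ℤ) : ℝ) ≤ (L : ℝ) := by push_cast; linarith
    exact_mod_cast this
  have ht1 : (1:ℝ) ≤ (t:ℝ) := by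
    have h2t' : (2:ℝ) ≤ (t:ℝ) ^ δ := by rw [← hr]; exact h2t
    by_contra h
    push_neg at h
    have ht0 : t = 0 := by exact_mod_cast Nat.lt_one_iff.1 (by exact_mod_cast h)
    rw [ht0] at h2t'
    push_cast at h2t'
    rw [Real.zero_rpow hδ.ne'] at h2t'
    norm_num at h2t'
  set L' : ℕ := ⌈r / 2⌉₊ with hL'
  have hrL' : r / 2 ≤ (L' : ℝ) := by rw [hL']; exact Nat.le_ceil _
  have hLL' : L ≤ 2 * (L' : ℤ) + 1 := by
    have h1 : L ≤ 2 * (L' : ℤ) := by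
      rw [hL]
      apply Int.ceil_le.2
      push_cast
      linarith
    omega
  have hL'3 : 2 * (L' : ℝ) + 1 ≤ r + 3 := by
    have : (L' : ℝ) < r / 2 + 1 := by
      rw [hL']
      exact Nat.ceil_lt_add_one (by linarith : (0:ℝ) ≤ r / 2)
    linarith
  -- the box-average hypothesis gives the count bound
  have hN : ∑ y ∈ Finset.Icc (-(L' : ℤ) - L') (-(L' : ℤ) + L'),
      (if η y then (1:ℝ) else 0) ≤ ρt * (2 * (L' : ℝ) + 1) := by
    have hden : (0:ℝ) < 2 * (L' : ℝ) + 1 := by positivity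
    have := hbox
    rw [boxAvg, div_le_iff₀ hden] at this
    exact this
  -- assemble the real chain
  have henv := aW_env_bound α β ρt A B η L L' hα hα1 hβ0 hβ hA hB (by omega) hLL'
    hρtpos.le hBA.le hN
  have hhit : hitw w L t 0 ≤ (t:ℝ) * qw w L t (-1) := hitw_le_main hw0 hw1 hL2 t
  have hqphi : qw w L t (-1) ≤ aW w L (-1) :=
    le_trans (qw_le_phiW hw0 hw1 (by omega) t (-1)) (phiW_neg_one_le hw0 hw1 (by omega))
  have hexp : B * ((L : ℝ) - 1) + (A - B) * (ρt * (2 * (L' : ℝ) + 1)) ≤ Et * r + K := by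
    have e1 : B * ((L : ℝ) - 1) ≤ B * (r - 1) := by
      apply mul_le_mul_of_nonpos_left (by linarith) hB0.le
    have e2 : (A - B) * (ρt * (2 * (L' : ℝ) + 1)) ≤ (A - B) * (ρt * (r + 3)) := by
      apply mul_le_mul_of_nonneg_left _ (by linarith : (0:ℝ) ≤ A - B)
      exact mul_le_mul_of_nonneg_left hL'3 hρtpos.le
    have e3 : B * (r - 1) + (A - B) * (ρt * (r + 3)) = Et * r + K := by
      rw [hEt, hK]; ring
    linarith
  have hfinal : hitw w L t 0 ≤ Real.exp (-C * r) := by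
    have h1 : hitw w L t 0 ≤ (t:ℝ) * Real.exp (Et * r + K) := by
      calc hitw w L t 0 ≤ (t:ℝ) * qw w L t (-1) := hhit
        _ ≤ (t:ℝ) * aW w L (-1) := by
            apply mul_le_mul_of_nonneg_left hqphi (by linarith)
        _ ≤ (t:ℝ) * Real.exp (Et * r + K) := by
            apply mul_le_mul_of_nonneg_left _ (by linarith)
            exact le_trans henv (Real.exp_le_exp.2 hexp)
    have h2 : Real.exp (Real.log t + (Et * r + K)) = (t:ℝ) * Real.exp (Et * r + K) := by
      rw [Real.exp_add, Real.exp_log (by linarith : (0:ℝ) < (t:ℝ))]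
    have h3 : Real.log t + (Et * r + K) ≤ -C * r := by
      have hEtC : Et = -(2*C) := by rw [hC]; ring
      have hEr : Et * r = -(2*C) * r := by rw [hEtC]
      linarith [hlogK]
    calc hitw w L t 0 ≤ (t:ℝ) * Real.exp (Et * r + K) := h1
      _ = Real.exp (Real.log t + (Et * r + K)) := h2.symm
      _ ≤ Real.exp (-C * r) := Real.exp_le_exp.2 h3
  exact le_trans (measure_hit_le w hw0 hw1 μ hμ t r hr0)
    (ENNReal.ofReal_le_ofReal hfinal)
end
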